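/- arXiv:2004.11574 — 2 statements merged into one kernel-verified Lean document; each statement's English description precedes it below -/
import Mathlib

section
/- In the L^p setting, suppose a sequence (w_n) ⊂ L^q(Ω,dλ) satisfies G(w_n) ≤ C < ∞ for all n, where G(w) = ∫_Ω ((1/q)(w₊)^q − w μ) dλ with μ := γ^{q−1} d(μ₁⊗μ₂)/dλ. Then the sequence of positive parts ((w_n)₊) is bounded in L^q(Ω,dλ) and the sequence of negative parts ((w_n)₋) is bounded in L^1(Ω,dλ). -/
open MeasureTheory Set Filter Topology ENNReal

noncomputable section

/-- A Young's function: `Φ t = ∫₀ᵗ φ(s) ds` (as an extended-real-valued function on `[0,∞)`)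
for an increasing, lower semicontinuous `φ : [0,∞) → [0,∞]` with `φ 0 = 0` that is neither
identically zero nor identically infinite on `(0,∞)`. -/
def IsYoungFunction (Φ : ℝ → EReal) : Prop :=
  ∃ φ : ℝ → ℝ≥0∞,
    MonotoneOn φ (Set.Ici 0) ∧ LowerSemicontinuousOn φ (Set.Ici 0) ∧ φ 0 = 0 ∧
    (∃ t : ℝ, 0 < t ∧ φ t ≠ 0) ∧ (∃ t : ℝ, 0 < t ∧ φ t ≠ ∞) ∧
    ∀ t : ℝ, 0 ≤ t → Φ t = ((∫⁻ s in Set.Ioc (0:ℝ) t, φ s : ℝ≥0∞) : EReal)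

/-- A quasi-Young's function: convex and lower semicontinuous on `[0,∞)` with positive part
a Young's function. -/
def IsQuasiYoung (Θ : ℝ → EReal) : Prop :=
  (∀ x ∈ Set.Ici (0:ℝ), ∀ y ∈ Set.Ici (0:ℝ), ∀ a b : ℝ, 0 ≤ a → 0 ≤ b → a + b = 1 →
      Θ (a * x + b * y) ≤ (a : EReal) * Θ x + (b : EReal) * Θ y) ∧
  LowerSemicontinuousOn Θ (Set.Ici 0) ∧
  IsYoungFunction (fun t => max (Θ t) 0)

/-- Positive part of an extended real number, as an element of `ℝ≥0∞`. -/
def erealToENNReal (x : EReal) : ℝ≥0∞ :=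
  if x = ⊤ then ⊤ else ENNReal.ofReal x.toReal

/-- Integral of an `EReal`-valued function: positive part minus negative part (in `EReal`). -/
def eintegral {α : Type*} [MeasurableSpace α] (ν : Measure α) (g : α → EReal) : EReal :=
  ((∫⁻ x, erealToENNReal (g x) ∂ν : ℝ≥0∞) : EReal) -
    ((∫⁻ x, erealToENNReal (-(g x)) ∂ν : ℝ≥0∞) : EReal)

/-- Integrability of an `EReal`-valued function: both positive and negative parts have
finite integral. -/
def EIntegrable {α : Type*} [MeasurableSpace α] (ν : Measure α) (g : α → EReal) : Prop :=
  (∫⁻ x, erealToENNReal (g x) ∂ν) ≠ ∞ ∧ (∫⁻ x, erealToENNReal (-(g x)) ∂ν) ≠ ∞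

/-- The Luxemburg (quasi-)norm associated to a (quasi-)Young's function, valued in `ℝ≥0∞`. -/
def luxNorm {α : Type*} [MeasurableSpace α] (ν : Measure α) (Θ : ℝ → EReal) (f : α → ℝ) : ℝ≥0∞ :=
  ⨅ (γ : ℝ) (_ : 0 < γ) (_ : eintegral ν (fun x => Θ (|f x| / γ)) ≤ 1), ENNReal.ofReal γ

/-- Membership in the Orlicz space `L^Θ(ν)`: finiteness of the Luxemburg norm. -/
def MemOrlicz {α : Type*} [MeasurableSpace α] (ν : Measure α) (Θ : ℝ → EReal) (f : α → ℝ) : Prop :=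
  luxNorm ν Θ f < ∞

/-- Extension of a function on `[0,∞)` to `ℝ` by `+∞` on the negatives. -/
def erealExt (Θ : ℝ → EReal) : ℝ → EReal := fun t => if 0 ≤ t then Θ t else ⊤

/-- Convex (Fenchel) conjugate of an `EReal`-valued function on `ℝ`. -/
def econj (g : ℝ → EReal) : ℝ → EReal := fun s => ⨆ t : ℝ, ((s * t : ℝ) : EReal) - g t

/-- Superlinear growth at infinity: `Φ(t)/t → ∞` as `t → ∞`. -/
def Superlinear (Θ : ℝ → EReal) : Prop :=
  ∀ M : ℝ, ∃ T : ℝ, ∀ t : ℝ, T ≤ t → ((M * t : ℝ) : EReal) ≤ Θ t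

/-- Weak-* convergence of a sequence of measures: integrals of continuous functions converge. -/
def WeakStarTendsto {X : Type*} [MeasurableSpace X] [TopologicalSpace X]
    (πs : ℕ → Measure X) (π : Measure X) : Prop :=
  ∀ f : X → ℝ, Continuous f →
    Tendsto (fun k => ∫ z, f z ∂(πs k)) atTop (𝓝 (∫ z, f z ∂π))

/-- The functional `G(w) = ∫ ((1/q) (w₊)^q − w μ) dλ` with
`μ = γ^{q−1} d(μ₁⊗μ₂)/dλ`. -/
def Gfunctional {A B : Type*} [MeasurableSpace A] [MeasurableSpace B]
    (q γ : ℝ) (lam : Measure (A × B)) (μ₁ : Measure A) (μ₂ : Measure B)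
    (w : A × B → ℝ) : ℝ :=
  ∫ z, ((1 / q) * (max (w z) 0) ^ q -
    w z * (γ ^ (q - 1) * ((μ₁.prod μ₂).rnDeriv lam z).toReal)) ∂lam


section GAuxSection

open MeasureTheory

private lemma GAux_rnDeriv_prod_ae {A B : Type*} [MeasurableSpace A] [MeasurableSpace B]
    (lam₁ : Measure A) (lam₂ : Measure B) [IsFiniteMeasure lam₁] [IsFiniteMeasure lam₂]
    (μ₁ : Measure A) (μ₂ : Measure B) [IsFiniteMeasure μ₁] [IsFiniteMeasure μ₂]
    (h₁ : μ₁ ≪ lam₁) (h₂ : μ₂ ≪ lam₂) :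
    (μ₁.prod μ₂).rnDeriv (lam₁.prod lam₂) =ᵐ[lam₁.prod lam₂]
      fun z => μ₁.rnDeriv lam₁ z.1 * μ₂.rnDeriv lam₂ z.2 := by
  have hmeas : Measurable fun z : A × B => μ₁.rnDeriv lam₁ z.1 * μ₂.rnDeriv lam₂ z.2 :=
    ((μ₁.measurable_rnDeriv lam₁).comp measurable_fst).mul
      ((μ₂.measurable_rnDeriv lam₂).comp measurable_snd)
  have key : μ₁.prod μ₂
      = (lam₁.prod lam₂).withDensity fun z => μ₁.rnDeriv lam₁ z.1 * μ₂.rnDeriv lam₂ z.2 := by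
    refine Measure.prod_eq fun s t hs ht => ?_
    rw [withDensity_apply _ (hs.prod ht), ← Measure.prod_restrict,
      lintegral_prod_mul (μ₁.measurable_rnDeriv lam₁).aemeasurable
        (μ₂.measurable_rnDeriv lam₂).aemeasurable,
      Measure.setLIntegral_rnDeriv h₁, Measure.setLIntegral_rnDeriv h₂]
  rw [key]
  exact Measure.rnDeriv_withDensity _ hmeas

private lemma GAux_memLp_prod_mul {A B : Type*} [MeasurableSpace A] [MeasurableSpace B]
    {ν₁ : Measure A} {ν₂ : Measure B} [SigmaFinite ν₁] [SigmaFinite ν₂]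
    {f : A → ℝ} {g : B → ℝ} (hfm : Measurable f) (hgm : Measurable g)
    {p : ℝ} (hp : 0 < p)
    (hf : MemLp f (ENNReal.ofReal p) ν₁) (hg : MemLp g (ENNReal.ofReal p) ν₂) :
    MemLp (fun z : A × B => f z.1 * g z.2) (ENNReal.ofReal p) (ν₁.prod ν₂) := by
  have hpne : (ENNReal.ofReal p) ≠ 0 := by
    simp [ENNReal.ofReal_eq_zero, not_le, hp]
  have hmeas : Measurable fun z : A × B => f z.1 * g z.2 :=
    (hfm.comp measurable_fst).mul (hgm.comp measurable_snd)
  refine ⟨hmeas.aestronglyMeasurable, ?_⟩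
  rw [eLpNorm_eq_lintegral_rpow_enorm_toReal hpne ENNReal.ofReal_ne_top, ENNReal.toReal_ofReal hp.le]
  have h1 : ∫⁻ x, (‖f x‖₊ : ℝ≥0∞) ^ p ∂ν₁ < ∞ := by
    have := lintegral_rpow_enorm_lt_top_of_eLpNorm_lt_top hpne ENNReal.ofReal_ne_top hf.2
    rwa [ENNReal.toReal_ofReal hp.le] at this
  have h2 : ∫⁻ y, (‖g y‖₊ : ℝ≥0∞) ^ p ∂ν₂ < ∞ := by
    have := lintegral_rpow_enorm_lt_top_of_eLpNorm_lt_top hpne ENNReal.ofReal_ne_top hg.2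
    rwa [ENNReal.toReal_ofReal hp.le] at this
  have hprod : ∫⁻ z, (‖f z.1 * g z.2‖₊ : ℝ≥0∞) ^ p ∂ν₁.prod ν₂
      = (∫⁻ x, (‖f x‖₊ : ℝ≥0∞) ^ p ∂ν₁) * ∫⁻ y, (‖g y‖₊ : ℝ≥0∞) ^ p ∂ν₂ := by
    rw [← lintegral_prod_mul (hfm.nnnorm.coe_nnreal_ennreal.pow_const p).aemeasurable
      (hgm.nnnorm.coe_nnreal_ennreal.pow_const p).aemeasurable]
    refine lintegral_congr fun z => ?_
    rw [nnnorm_mul, ENNReal.coe_mul, ENNReal.mul_rpow_of_nonneg _ _ hp.le]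
  calc (∫⁻ z, (‖(fun z : A × B => f z.1 * g z.2) z‖₊ : ℝ≥0∞) ^ p ∂ν₁.prod ν₂) ^ (1 / p)
      = ((∫⁻ x, (‖f x‖₊ : ℝ≥0∞) ^ p ∂ν₁) * ∫⁻ y, (‖g y‖₊ : ℝ≥0∞) ^ p ∂ν₂) ^ (1 / p) := by
        rw [← hprod]
    _ < ∞ := ENNReal.rpow_lt_top_of_nonneg (by positivity)
        (ENNReal.mul_ne_top h1.ne h2.ne)

private lemma GAux_young_scaled {p q x y : ℝ} (hpq : Real.HolderConjugate p q)
    (hx : 0 ≤ x) (hy : 0 ≤ y) :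
    x * y ≤ x ^ q / (2 * q) + ((2:ℝ) ^ (1/q)) ^ p * y ^ p / p := by
  have hq0 : (0:ℝ) < q := hpq.symm.pos
  have hs : (0:ℝ) < (2:ℝ) ^ (1/q) := Real.rpow_pos_of_pos two_pos _
  have hsq : ((2:ℝ) ^ (1/q)) ^ q = 2 := by
    rw [← Real.rpow_mul (by norm_num : (0:ℝ) ≤ 2), one_div, inv_mul_cancel₀ hq0.ne',
      Real.rpow_one]
  have h := Real.young_inequality_of_nonneg (div_nonneg hx hs.le) (mul_nonneg hs.le hy) hpq.symm
  have e0 : x / (2:ℝ) ^ (1/q) * ((2:ℝ) ^ (1/q) * y) = x * y := by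
    field_simp
  have e1 : (x / (2:ℝ) ^ (1/q)) ^ q = x ^ q / 2 := by
    rw [Real.div_rpow hx hs.le, hsq]
  have e2 : ((2:ℝ) ^ (1/q) * y) ^ p = ((2:ℝ) ^ (1/q)) ^ p * y ^ p := Real.mul_rpow hs.le hy
  rw [e0, e1, e2] at h
  calc x * y ≤ x ^ q / 2 / q + ((2:ℝ) ^ (1/q)) ^ p * y ^ p / p := h
    _ = x ^ q / (2 * q) + ((2:ℝ) ^ (1/q)) ^ p * y ^ p / p := by rw [div_div]

end GAuxSection

/-- Lemma: coercivity of `G`.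
In the `L^p` setting, if `G(w_n) ≤ C < ∞` for all `n`, then the positive parts `(w_n)₊` are
bounded in `L^q(Ω,dλ)` and the negative parts `(w_n)₋` are bounded in `L¹(Ω,dλ)`. -/
theorem G_coercive_bounds
    (n : ℕ) (Ω₁ Ω₂ : Set (Fin n → ℝ)) (hΩ₁ : IsCompact Ω₁) (hΩ₂ : IsCompact Ω₂)
    (lam₁ : Measure ↥Ω₁) (lam₂ : Measure ↥Ω₂)
    [IsFiniteMeasure lam₁] [IsFiniteMeasure lam₂]
    [lam₁.IsOpenPosMeasure] [lam₂.IsOpenPosMeasure]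
    (p q : ℝ) (hp : 1 < p) (hpq : 1 / p + 1 / q = 1)
    (c : ↥Ω₁ × ↥Ω₂ → ℝ) (hc : Continuous c)
    (cdag : ℝ) (hcdag : ∀ z, cdag ≤ c z)
    (μ₁ : Measure ↥Ω₁) (μ₂ : Measure ↥Ω₂)
    [IsProbabilityMeasure μ₁] [IsProbabilityMeasure μ₂]
    (hμ₁ : μ₁ ≪ lam₁) (hμ₂ : μ₂ ≪ lam₂)
    (hd₁ : MemLp (fun x => (μ₁.rnDeriv lam₁ x).toReal) (ENNReal.ofReal p) lam₁)
    (hd₂ : MemLp (fun y => (μ₂.rnDeriv lam₂ y).toReal) (ENNReal.ofReal p) lam₂)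
    (δ : ℝ) (hδ : 0 < δ)
    (hδ₁ : ∀ᵐ x ∂lam₁, δ ≤ (μ₁.rnDeriv lam₁ x).toReal)
    (hδ₂ : ∀ᵐ y ∂lam₂, δ ≤ (μ₂.rnDeriv lam₂ y).toReal)
    (γ : ℝ) (hγ : 0 < γ)
    (w : ℕ → ↥Ω₁ × ↥Ω₂ → ℝ)
    (hw : ∀ k, MemLp (w k) (ENNReal.ofReal q) (lam₁.prod lam₂))
    (C : ℝ) (hCpos : 0 < C)
    (hC : ∀ k, Gfunctional q γ (lam₁.prod lam₂) μ₁ μ₂ (w k) ≤ C) :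
    (∃ B : ℝ≥0∞, B ≠ ∞ ∧ ∀ k,
      eLpNorm (fun z => max (w k z) 0) (ENNReal.ofReal q) (lam₁.prod lam₂) ≤ B) ∧
    (∃ B : ℝ≥0∞, B ≠ ∞ ∧ ∀ k,
      eLpNorm (fun z => max (-(w k z)) 0) 1 (lam₁.prod lam₂) ≤ B) := by
  have hpq' : Real.HolderConjugate p q := Real.holderConjugate_iff.mpr ⟨hp, by simpa [one_div] using hpq⟩
  have hp0 : (0:ℝ) < p := hpq'.pos
  have hq0 : (0:ℝ) < q := hpq'.symm.pos
  have hq1 : (1:ℝ) < q := (Real.holderConjugate_iff.mp hpq'.symm).1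
  have hqne : (ENNReal.ofReal q) ≠ 0 := by simp [ENNReal.ofReal_eq_zero, not_le, hq0]
  have hpne : (ENNReal.ofReal p) ≠ 0 := by simp [ENNReal.ofReal_eq_zero, not_le, hp0]
  set lam : Measure (↥Ω₁ × ↥Ω₂) := lam₁.prod lam₂ with hlam_def
  set m : ↥Ω₁ × ↥Ω₂ → ℝ :=
    fun z => γ ^ (q - 1) * ((μ₁.prod μ₂).rnDeriv (lam₁.prod lam₂) z).toReal with hm_def
  have hγq : (0:ℝ) < γ ^ (q - 1) := Real.rpow_pos_of_pos hγ _
  have hm_nonneg : ∀ z, 0 ≤ m z := fun z => mul_nonneg hγq.le ENNReal.toReal_nonneg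
  have hm_ae : m =ᵐ[lam] fun z =>
      γ ^ (q - 1) * ((μ₁.rnDeriv lam₁ z.1).toReal * (μ₂.rnDeriv lam₂ z.2).toReal) := by
    filter_upwards [GAux_rnDeriv_prod_ae lam₁ lam₂ μ₁ μ₂ hμ₁ hμ₂] with z hz
    simp only [hm_def]
    rw [hz, ENNReal.toReal_mul]
  have hfst : ∀ᵐ z ∂lam, δ ≤ (μ₁.rnDeriv lam₁ z.1).toReal :=
    Measure.quasiMeasurePreserving_fst.ae hδ₁
  have hsnd : ∀ᵐ z ∂lam, δ ≤ (μ₂.rnDeriv lam₂ z.2).toReal :=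
    Measure.quasiMeasurePreserving_snd.ae hδ₂
  have hδm : ∀ᵐ z ∂lam, γ ^ (q - 1) * (δ * δ) ≤ m z := by
    filter_upwards [hm_ae, hfst, hsnd] with z h0 h1 h2
    rw [h0]
    refine mul_le_mul_of_nonneg_left ?_ hγq.le
    exact mul_le_mul h1 h2 hδ.le (le_trans hδ.le h1)
  have ht₁ : Measurable fun x : ↥Ω₁ => (μ₁.rnDeriv lam₁ x).toReal :=
    (Measure.measurable_rnDeriv _ _).ennreal_toReal
  have ht₂ : Measurable fun y : ↥Ω₂ => (μ₂.rnDeriv lam₂ y).toReal :=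
    (Measure.measurable_rnDeriv _ _).ennreal_toReal
  have hm_mem : MemLp m (ENNReal.ofReal p) lam := by
    have hprod := GAux_memLp_prod_mul ht₁ ht₂ hp0 hd₁ hd₂
    exact (hprod.const_mul (γ ^ (q - 1))).ae_eq hm_ae.symm
  have hM_int : Integrable (fun z => m z ^ p) lam := by
    have h := hm_mem.integrable_norm_rpow hpne ENNReal.ofReal_ne_top
    rw [ENNReal.toReal_ofReal hp0.le] at h
    exact h.congr (Eventually.of_forall fun z => by
      show ‖m z‖ ^ p = m z ^ p
      rw [Real.norm_of_nonneg (hm_nonneg z)])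
  set M := ∫ z, m z ^ p ∂lam with hM_def
  have hM0 : 0 ≤ M := integral_nonneg fun z => Real.rpow_nonneg (hm_nonneg z) _
  set K0 : ℝ := ((2:ℝ) ^ (1/q)) ^ p * M / p with hK0_def
  have hK0 : 0 ≤ K0 :=
    div_nonneg (mul_nonneg (Real.rpow_nonneg (Real.rpow_nonneg (by norm_num) _) _) hM0) hp0.le
  set ε : ℝ := γ ^ (q - 1) * (δ * δ) with hε_def
  have hε : 0 < ε := mul_pos hγq (mul_pos hδ hδ)
  have h1pq : (1:ℝ≥0∞) / 1 = 1 / ENNReal.ofReal q + 1 / ENNReal.ofReal p := by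
    simp only [one_div, inv_one]
    rw [hpq'.symm.inv_add_inv_ennreal]
  have hmul_int : ∀ (f : ↥Ω₁ × ↥Ω₂ → ℝ), MemLp f (ENNReal.ofReal q) lam →
      Integrable (fun z => f z * m z) lam := by
    intro f hf
    have h := hm_mem.smul hf (hpqr := ⟨by rw [inv_one]; simpa only [one_div, inv_one] using h1pq.symm⟩)
    rw [memLp_one_iff_integrable] at h
    have he : f • m = fun z => f z * m z := rfl
    rwa [he] at h
  have key : ∀ k,
      eLpNorm (fun z => max (w k z) 0) (ENNReal.ofReal q) lam
        ≤ ENNReal.ofReal ((C + K0) * (2 * q)) ^ (1/q) ∧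
      eLpNorm (fun z => max (-(w k z)) 0) 1 lam ≤ ENNReal.ofReal ((C + K0) / ε) := by
    intro k
    have hpos_mem : MemLp (fun z => max (w k z) 0) (ENNReal.ofReal q) lam := (hw k).pos_part
    have hneg_mem : MemLp (fun z => max (-(w k z)) 0) (ENNReal.ofReal q) lam := (hw k).neg_part
    have hA_int : Integrable (fun z => (max (w k z) 0) ^ q) lam := by
      have h := hpos_mem.integrable_norm_rpow hqne ENNReal.ofReal_ne_top
      rw [ENNReal.toReal_ofReal hq0.le] at h
      exact h.congr (Eventually.of_forall fun z => by
        show ‖max (w k z) 0‖ ^ q = max (w k z) 0 ^ q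
        rw [Real.norm_of_nonneg (le_max_right _ _)])
    set A := ∫ z, (max (w k z) 0) ^ q ∂lam with hA_def
    have hA0 : 0 ≤ A := integral_nonneg fun z => Real.rpow_nonneg (le_max_right _ _) _
    have hN_int : Integrable (fun z => max (-(w k z)) 0) lam :=
      hneg_mem.integrable (le_trans (le_of_eq ENNReal.ofReal_one.symm)
        (ENNReal.ofReal_le_ofReal hq1.le))
    set N := ∫ z, max (-(w k z)) 0 ∂lam with hN_def
    have hN0 : 0 ≤ N := integral_nonneg fun z => le_max_right _ _
    have hwm_int := hmul_int (w k) (hw k)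
    have hposm_int := hmul_int _ hpos_mem
    have hnegm_int := hmul_int _ hneg_mem
    have hG : Gfunctional q γ lam μ₁ μ₂ (w k)
        = (1/q) * A - ∫ z, w k z * m z ∂lam := by
      have h0 : Gfunctional q γ lam μ₁ μ₂ (w k)
          = ∫ z, ((1/q) * (max (w k z) 0) ^ q - w k z * m z) ∂lam := rfl
      rw [h0, integral_sub (hA_int.const_mul (1/q)) hwm_int, integral_const_mul, hA_def]
    have hHolder : ∫ z, (max (w k z) 0) * m z ∂lam ≤ A ^ (1/q) * M ^ (1/p) := by
      rw [hA_def, hM_def]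
      exact integral_mul_le_Lp_mul_Lq_of_nonneg hpq'.symm
        (Eventually.of_forall fun z => le_max_right (w k z) 0)
        (Eventually.of_forall hm_nonneg) hpos_mem hm_mem
    have hYoung : A ^ (1/q) * M ^ (1/p) ≤ A / (2*q) + K0 := by
      have h := GAux_young_scaled hpq' (Real.rpow_nonneg hA0 (1/q)) (Real.rpow_nonneg hM0 (1/p))
      have e1 : (A ^ ((1:ℝ)/q)) ^ q = A := by
        rw [← Real.rpow_mul hA0, one_div, inv_mul_cancel₀ hq0.ne', Real.rpow_one]
      have e2 : (M ^ ((1:ℝ)/p)) ^ p = M := by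
        rw [← Real.rpow_mul hM0, one_div, inv_mul_cancel₀ hp0.ne', Real.rpow_one]
      rw [e1, e2] at h
      rw [hK0_def]
      exact h
    have hposm_le : ∫ z, (max (w k z) 0) * m z ∂lam ≤ A/(2*q) + K0 := hHolder.trans hYoung
    have hnegm_ge : ε * N ≤ ∫ z, (max (-(w k z)) 0) * m z ∂lam := by
      rw [hN_def, ← integral_const_mul]
      refine integral_mono_ae (hN_int.const_mul ε) hnegm_int ?_
      filter_upwards [hδm] with z hz
      calc ε * max (-(w k z)) 0 = max (-(w k z)) 0 * ε := mul_comm _ _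
        _ ≤ max (-(w k z)) 0 * m z := mul_le_mul_of_nonneg_left hz (le_max_right _ _)
    have hsplit : ∫ z, w k z * m z ∂lam
        = (∫ z, (max (w k z) 0) * m z ∂lam) - ∫ z, (max (-(w k z)) 0) * m z ∂lam := by
      rw [← integral_sub hposm_int hnegm_int]
      refine integral_congr_ae (Eventually.of_forall fun z => ?_)
      have hw' := max_zero_sub_max_neg_zero_eq_self (w k z)
      linear_combination (-(m z)) * hw'
    have hGle := hC k
    rw [hG] at hGle
    have hwm_le : ∫ z, w k z * m z ∂lam ≤ A/(2*q) + K0 - ε*N := by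
      rw [hsplit]; linarith [hposm_le, hnegm_ge]
    have hsplit2 : (1/q)*A - A/(2*q) = A/(2*q) := by
      field_simp
      ring
    have hmain : A/(2*q) + ε*N ≤ C + K0 := by linarith [hGle, hwm_le, hsplit2]
    have hA_le : A ≤ (C + K0) * (2*q) := by
      have h1 : A/(2*q) ≤ C + K0 := by linarith [mul_nonneg hε.le hN0]
      calc A = A/(2*q) * (2*q) := (div_mul_cancel₀ A (by positivity : (0:ℝ) < 2*q).ne').symm
        _ ≤ (C+K0) * (2*q) := mul_le_mul_of_nonneg_right h1 (by positivity)
    have hN_le : N ≤ (C + K0)/ε := by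
      rw [le_div_iff₀ hε]
      have := div_nonneg hA0 (by positivity : (0:ℝ) ≤ 2*q)
      linarith [hmain]
    constructor
    · have e1 : eLpNorm (fun z => max (w k z) 0) (ENNReal.ofReal q) lam
          = ENNReal.ofReal A ^ (1/q) := by
        rw [eLpNorm_eq_lintegral_rpow_enorm_toReal hqne ENNReal.ofReal_ne_top,
          ENNReal.toReal_ofReal hq0.le]
        congr 1
        rw [hA_def, ofReal_integral_eq_lintegral_ofReal hA_int
          (Eventually.of_forall fun z => Real.rpow_nonneg (le_max_right _ _) _)]
        refine lintegral_congr fun z => ?_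
        show ‖max (w k z) 0‖ₑ ^ q = ENNReal.ofReal (max (w k z) 0 ^ q)
        rw [Real.enorm_eq_ofReal (le_max_right _ _),
          ENNReal.ofReal_rpow_of_nonneg (le_max_right _ _) hq0.le]
      rw [e1]
      exact ENNReal.rpow_le_rpow (ENNReal.ofReal_le_ofReal hA_le) (by positivity)
    · have e2 : eLpNorm (fun z => max (-(w k z)) 0) 1 lam = ENNReal.ofReal N := by
        rw [eLpNorm_one_eq_lintegral_enorm, hN_def,
          ofReal_integral_eq_lintegral_ofReal hN_int
            (Eventually.of_forall fun z => le_max_right _ _)]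
        exact lintegral_congr fun z => Real.enorm_eq_ofReal (le_max_right _ _)
      rw [e2]
      exact ENNReal.ofReal_le_ofReal hN_le
  exact ⟨⟨ENNReal.ofReal ((C + K0) * (2 * q)) ^ (1/q),
      ENNReal.rpow_ne_top_of_nonneg (by positivity) ENNReal.ofReal_ne_top,
      fun k => (key k).1⟩,
    ⟨ENNReal.ofReal ((C + K0) / ε), ENNReal.ofReal_ne_top, fun k => (key k).2⟩⟩
end
end

section
/- In the L^p setting with p ≥ 2, every optimal solution (ᾱ₁, ᾱ₂) ∈ L¹(Ω₁,dλ₁) × L¹(Ω₂,dλ₂) of the variant predual problem (P†) satisfies ᾱ_i ∈ L^q(Ω_i,dλ_i) for i = 1,2; moreover the negative parts (ᾱ_i)₋ are essentially bounded (belong to L^∞(Ω_i,dλ_i)), and the function (1/γ^{q−1})((ᾱ₁⊕ᾱ₂ − c)₊)^{q−1} on Ω has marginal densities dμ₁/dλ₁ and dμ₂/dλ₂, i.e. ∫_{Ω₂}((ᾱ₁⊕ᾱ₂ − c)₊)^{q−1} dλ₂ = γ^{q−1} dμ₁/dλ₁ λ₁-a.e. and symmetrically for the other marginal. -/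
open MeasureTheory Set Filter Topology ENNReal

noncomputable section

/-- Feasibility for the variant predual problem (P†). -/
def PdaggerFeasible {A B : Type*} [MeasurableSpace A] [MeasurableSpace B]
    (q : ℝ) (c : A × B → ℝ) (lam₁ : Measure A) (lam₂ : Measure B)
    (α₁ : A → ℝ) (α₂ : B → ℝ) : Prop :=
  Integrable α₁ lam₁ ∧ Integrable α₂ lam₂ ∧
    MemLp (fun z : A × B => max (α₁ z.1 + α₂ z.2 - c z) 0) (ENNReal.ofReal q)
      (lam₁.prod lam₂)

/-- Objective `Λ(α₁,α₂)` of the variant predual problem (P†). -/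
def LambdaValue {A B : Type*} [MeasurableSpace A] [MeasurableSpace B]
    (q γ : ℝ) (c : A × B → ℝ) (lam : Measure (A × B))
    (μ₁ : Measure A) (μ₂ : Measure B) (α₁ : A → ℝ) (α₂ : B → ℝ) : ℝ :=
  (1 / q) * (∫ z, (max (α₁ z.1 + α₂ z.2 - c z) 0) ^ q ∂lam) -
    γ ^ (q - 1) * (∫ x, α₁ x ∂μ₁) - γ ^ (q - 1) * (∫ y, α₂ y ∂μ₂)



section Helpers


lemma hasDerivAt_maxRpow {q : ℝ} (hq : 1 < q) (u : ℝ) :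
    HasDerivAt (fun v : ℝ => max v 0 ^ q) (q * max u 0 ^ (q - 1)) u := by
  have hq1 : (0:ℝ) < q - 1 := by linarith
  rcases lt_trichotomy u 0 with hu | rfl | hu
  · have h0 : (fun v : ℝ => max v 0 ^ q) =ᶠ[𝓝 u] fun _ => (0:ℝ) ^ q := by
      filter_upwards [Iio_mem_nhds hu] with v hv
      rw [max_eq_right (le_of_lt hv)]
    have hc : HasDerivAt (fun _ : ℝ => (0:ℝ) ^ q) 0 u := hasDerivAt_const u _
    have := hc.congr_of_eventuallyEq h0
    rw [max_eq_right hu.le, Real.zero_rpow hq1.ne', mul_zero]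
    exact this
  · rw [max_self, Real.zero_rpow hq1.ne', mul_zero]
    rw [hasDerivAt_iff_isLittleO]
    simp only [sub_zero, smul_zero, max_self, Real.zero_rpow (by linarith : q ≠ 0)]
    rw [Asymptotics.isLittleO_iff]
    intro c hc
    have hb : ∀ᶠ v : ℝ in 𝓝 0, |v| < c ^ (1 / (q - 1)) := by
      filter_upwards [Metric.ball_mem_nhds (0:ℝ) (Real.rpow_pos_of_pos hc _)] with v hv
      simpa [Real.dist_eq] using hv
    filter_upwards [hb] with v hv
    rcases eq_or_ne v 0 with rfl | hv0
    · simp [Real.zero_rpow (by linarith : q ≠ 0)]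
    have hav : 0 < |v| := abs_pos.mpr hv0
    have h1 : max v 0 ^ q ≤ |v| ^ q :=
      Real.rpow_le_rpow (le_max_right _ _) (max_le (le_abs_self v) (abs_nonneg v)) (by linarith)
    have h2 : |v| ^ q = |v| ^ (q - 1) * |v| := by
      nth_rewrite 3 [← Real.rpow_one (|v|)]
      rw [← Real.rpow_add hav]; ring_nf
    have h3 : |v| ^ (q - 1) ≤ c := by
      have := Real.rpow_le_rpow (abs_nonneg v) hv.le hq1.le
      rwa [one_div, Real.rpow_inv_rpow hc.le hq1.ne'] at this
    have h4 : max v 0 ^ q ≤ c * |v| := by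
      rw [h2] at h1
      calc max v 0 ^ q ≤ |v| ^ (q-1) * |v| := h1
        _ ≤ c * |v| := mul_le_mul_of_nonneg_right h3 (abs_nonneg v)
    calc ‖max v 0 ^ q‖ = max v 0 ^ q := by
          rw [Real.norm_eq_abs, abs_of_nonneg (Real.rpow_nonneg (le_max_right _ _) _)]
      _ ≤ c * |v| := h4
      _ = c * ‖v‖ := by rw [Real.norm_eq_abs]
  · have h0 : (fun v : ℝ => max v 0 ^ q) =ᶠ[𝓝 u] fun v => v ^ q := by
      filter_upwards [Ioi_mem_nhds hu] with v hv
      rw [max_eq_left (le_of_lt hv)]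
    have hc : HasDerivAt (fun v : ℝ => v ^ q) (q * u ^ (q - 1)) u :=
      Real.hasDerivAt_rpow_const (Or.inl hu.ne')
    have := hc.congr_of_eventuallyEq h0
    rw [max_eq_left hu.le]
    exact this

lemma tangent_le {f f' : ℝ → ℝ} (hd : ∀ x, HasDerivAt f (f' x) x) (hm : Monotone f')
    (a b : ℝ) : f' a * (b - a) ≤ f b - f a := by
  rcases lt_trichotomy a b with h | rfl | h
  · obtain ⟨ξ, hξ, hval⟩ := exists_hasDerivAt_eq_slope f f' h
      (fun x _ => (hd x).continuousAt.continuousWithinAt) (fun x _ => hd x)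
    rw [eq_div_iff (sub_ne_zero.mpr (ne_of_gt h))] at hval
    rw [← hval]
    exact mul_le_mul_of_nonneg_right (hm hξ.1.le) (by linarith)
  · simp
  · obtain ⟨ξ, hξ, hval⟩ := exists_hasDerivAt_eq_slope f f' h
      (fun x _ => (hd x).continuousAt.continuousWithinAt) (fun x _ => hd x)
    rw [eq_div_iff (sub_ne_zero.mpr (ne_of_gt h))] at hval
    have h1 : f' ξ ≤ f' a := hm hξ.2.le
    nlinarith [hval, sub_neg.mpr h]

lemma maxRpow_grad {q : ℝ} (hq : 1 < q) (a b : ℝ) :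
    q * ((b - a) * max a 0 ^ (q - 1)) ≤ max b 0 ^ q - max a 0 ^ q := by
  have hm : Monotone (fun u : ℝ => q * max u 0 ^ (q - 1)) := by
    intro x y hxy
    exact mul_le_mul_of_nonneg_left
      (Real.rpow_le_rpow (le_max_right _ _) (max_le_max hxy le_rfl) (by linarith))
      (by linarith)
  have h := tangent_le (f := fun v : ℝ => max v 0 ^ q)
    (f' := fun u : ℝ => q * max u 0 ^ (q - 1)) (hasDerivAt_maxRpow hq) hm a b
  calc q * ((b - a) * max a 0 ^ (q - 1)) = q * max a 0 ^ (q - 1) * (b - a) := by ring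
    _ ≤ _ := h

lemma continuous_maxRpow {r : ℝ} (hr : 0 ≤ r) : Continuous (fun u : ℝ => max u 0 ^ r) :=
  (Real.continuous_rpow_const hr).comp (continuous_id.max continuous_const)

lemma integrable_of_density_bound {X : Type*} [MeasurableSpace X] {μ lam : Measure X}
    [IsFiniteMeasure lam] [IsFiniteMeasure μ] (hac : μ ≪ lam) {R : ℝ}
    (hR : ∀ᵐ x ∂lam, (μ.rnDeriv lam x).toReal ≤ R) {f : X → ℝ}
    (hf : Integrable f lam) : Integrable f μ := by
  have hmeas : AEStronglyMeasurable f μ := hf.1.mono_ac hac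
  refine ⟨hmeas, ?_⟩
  rw [hasFiniteIntegral_def]
  have hd : ∀ᵐ x ∂lam, μ.rnDeriv lam x ≤ ENNReal.ofReal R := by
    filter_upwards [hR, Measure.rnDeriv_lt_top μ lam] with x h1 h2
    rw [← ENNReal.ofReal_toReal h2.ne]
    exact ENNReal.ofReal_le_ofReal h1
  have key : ∫⁻ x, ‖f x‖ₑ ∂μ = ∫⁻ x, μ.rnDeriv lam x * ‖f x‖ₑ ∂lam :=
    (lintegral_rnDeriv_mul hac hf.1.enorm).symm
  rw [key]
  calc ∫⁻ x, μ.rnDeriv lam x * ‖f x‖ₑ ∂lam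
      ≤ ∫⁻ x, ENNReal.ofReal R * ‖f x‖ₑ ∂lam := by
        refine lintegral_mono_ae ?_
        filter_upwards [hd] with x hx using mul_le_mul_left hx _
    _ = ENNReal.ofReal R * ∫⁻ x, ‖f x‖ₑ ∂lam := lintegral_const_mul' _ _ ENNReal.ofReal_ne_top
    _ < ∞ := ENNReal.mul_lt_top ENNReal.ofReal_lt_top hf.2

lemma integrable_rpow_of_memLp {Z : Type*} [MeasurableSpace Z] {μ : Measure Z} {q : ℝ}
    (hq : 0 < q) {f : Z → ℝ} (hf : MemLp f (ENNReal.ofReal q) μ) (h0 : ∀ z, 0 ≤ f z) :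
    Integrable (fun z => f z ^ q) μ := by
  have h := hf.integrable_norm_rpow (by simp [ENNReal.ofReal_eq_zero]; linarith)
    ENNReal.ofReal_ne_top
  rw [ENNReal.toReal_ofReal hq.le] at h
  refine h.congr (Eventually.of_forall fun z => ?_)
  simp only [Real.norm_eq_abs, abs_of_nonneg (h0 z)]

lemma core_EL {Z : Type*} [MeasurableSpace Z] (μ : Measure Z) [IsFiniteMeasure μ]
    {q : ℝ} (hq : 1 < q) {S G : Z → ℝ}
    (hS : AEStronglyMeasurable S μ)
    (hSq : MemLp (fun z => max (S z) 0) (ENNReal.ofReal q) μ)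
    (hG : AEStronglyMeasurable G μ) (hGb : ∀ z, |G z| ≤ 1)
    {E : ℝ}
    (h1 : ∀ t : ℝ, 0 < t → t ≤ 1 →
      q * (t * E) ≤ (∫ z, max (S z + t * G z) 0 ^ q ∂μ) - ∫ z, max (S z) 0 ^ q ∂μ)
    (h2 : ∀ t : ℝ, 0 < t → t ≤ 1 →
      (∫ z, max (S z) 0 ^ q ∂μ) - (∫ z, max (S z + (-t) * G z) 0 ^ q ∂μ) ≤ q * (t * E)) :
    ∫ z, G z * max (S z) 0 ^ (q - 1) ∂μ = E := by
  have hq0 : (0:ℝ) < q := by linarith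
  have hq1 : (0:ℝ) < q - 1 := by linarith
  -- basic memLp/integrability facts
  have hY : MemLp (fun z => max (S z) 0 + 1) (ENNReal.ofReal q) μ :=
    hSq.add (memLp_const 1)
  have hYint : Integrable (fun z => (max (S z) 0 + 1) ^ q) μ :=
    integrable_rpow_of_memLp hq0 hY (fun z => by positivity)
  have hptw : ∀ t : ℝ, |t| ≤ 1 → ∀ z, max (S z + t * G z) 0 ≤ max (S z) 0 + 1 := by
    intro t ht z
    have h1' : |t * G z| ≤ 1 := by
      rw [abs_mul]
      calc |t| * |G z| ≤ 1 * 1 := mul_le_mul ht (hGb z) (abs_nonneg _) zero_le_one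
        _ = 1 := mul_one 1
    have : S z + t * G z ≤ max (S z) 0 + 1 := by
      have := le_max_left (S z) 0
      have := neg_abs_le (t * G z)
      linarith [abs_le.mp h1']
    exact max_le this (by positivity)
  have hSM : ∀ t : ℝ, AEStronglyMeasurable (fun z => S z + t * G z) μ :=
    fun t => hS.add (hG.const_mul t)
  have hbase_int : ∀ t : ℝ, |t| ≤ 1 →
      Integrable (fun z => max (S z + t * G z) 0 ^ q) μ := by
    intro t ht
    refine hYint.mono ((continuous_maxRpow hq0.le).comp_aestronglyMeasurable (hSM t))
      (Eventually.of_forall fun z => ?_)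
    have hb : (0:ℝ) ≤ max (S z + t * G z) 0 := le_max_right _ _
    rw [Real.norm_eq_abs, Real.norm_eq_abs, abs_of_nonneg (Real.rpow_nonneg hb _),
      abs_of_nonneg (Real.rpow_nonneg (by positivity) _)]
    exact Real.rpow_le_rpow hb (hptw t ht z) hq0.le
  have hbound_int : Integrable (fun z => (max (S z) 0 + 1) ^ (q - 1)) μ := by
    refine hYint.mono (((Real.continuous_rpow_const hq1.le).comp
      ((continuous_id.max continuous_const).add continuous_const)).comp_aestronglyMeasurable hS) ?_
    · refine Eventually.of_forall fun z => ?_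
      have hb : (1:ℝ) ≤ max (S z) 0 + 1 := by linarith [le_max_right (S z) (0:ℝ)]
      rw [Real.norm_eq_abs, Real.norm_eq_abs, abs_of_nonneg (Real.rpow_nonneg (by positivity) _),
        abs_of_nonneg (Real.rpow_nonneg (by positivity) _)]
      exact Real.rpow_le_rpow_of_exponent_le hb (by linarith)
  have hGX_int : ∀ t : ℝ, |t| ≤ 1 →
      Integrable (fun z => G z * max (S z + t * G z) 0 ^ (q - 1)) μ := by
    intro t ht
    refine hbound_int.mono (hG.mul ((continuous_maxRpow hq1.le).comp_aestronglyMeasurable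
      (hSM t))) (Eventually.of_forall fun z => ?_)
    have hb : (0:ℝ) ≤ max (S z + t * G z) 0 := le_max_right _ _
    rw [Real.norm_eq_abs, Real.norm_eq_abs, abs_mul,
      abs_of_nonneg (Real.rpow_nonneg hb _),
      abs_of_nonneg (Real.rpow_nonneg (by positivity : (0:ℝ) ≤ max (S z) 0 + 1) _)]
    calc |G z| * max (S z + t * G z) 0 ^ (q - 1)
        ≤ 1 * max (S z + t * G z) 0 ^ (q - 1) :=
          mul_le_mul_of_nonneg_right (hGb z) (Real.rpow_nonneg hb _)
      _ = max (S z + t * G z) 0 ^ (q - 1) := one_mul _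
      _ ≤ (max (S z) 0 + 1) ^ (q - 1) := Real.rpow_le_rpow hb (hptw t ht z) hq1.le
  -- dominated convergence
  have hDCT : ∀ tseq : ℕ → ℝ, (∀ n, |tseq n| ≤ 1) → Tendsto tseq atTop (𝓝 0) →
      Tendsto (fun n => ∫ z, G z * max (S z + tseq n * G z) 0 ^ (q - 1) ∂μ) atTop
        (𝓝 (∫ z, G z * max (S z) 0 ^ (q - 1) ∂μ)) := by
    intro tseq hts hto
    refine tendsto_integral_of_dominated_convergence
      (fun z => (max (S z) 0 + 1) ^ (q - 1))
      (fun n => (hG.mul ((continuous_maxRpow hq1.le).comp_aestronglyMeasurable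
        (hSM (tseq n))))) hbound_int ?_ ?_
    · intro n
      refine Eventually.of_forall fun z => ?_
      have hb : (0:ℝ) ≤ max (S z + tseq n * G z) 0 := le_max_right _ _
      rw [Real.norm_eq_abs, abs_mul, abs_of_nonneg (Real.rpow_nonneg hb _)]
      calc |G z| * max (S z + tseq n * G z) 0 ^ (q - 1)
          ≤ 1 * max (S z + tseq n * G z) 0 ^ (q - 1) :=
            mul_le_mul_of_nonneg_right (hGb z) (Real.rpow_nonneg hb _)
        _ = max (S z + tseq n * G z) 0 ^ (q - 1) := one_mul _
        _ ≤ (max (S z) 0 + 1) ^ (q - 1) := Real.rpow_le_rpow hb (hptw _ (hts n) z) hq1.le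
    · refine Eventually.of_forall fun z => ?_
      have harg : Tendsto (fun n => S z + tseq n * G z) atTop (𝓝 (S z)) := by
        have := (hto.mul_const (G z)).const_add (S z)
        simpa using this
      have hcont := ((continuous_maxRpow hq1.le).tendsto (S z)).comp harg
      exact hcont.const_mul (G z)
  have hS0q : Integrable (fun z => max (S z) 0 ^ q) μ :=
    integrable_rpow_of_memLp hq0 hSq (fun z => le_max_right _ _)
  set I := ∫ z, G z * max (S z) 0 ^ (q - 1) ∂μ with hI
  have hseq_pos : ∀ n : ℕ, (0:ℝ) < 1 / (n + 1) := fun n => by positivity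
  have hseq_le : ∀ n : ℕ, (1:ℝ) / (n + 1) ≤ 1 := fun n => by
    rw [div_le_one (by positivity)]; linarith [Nat.cast_nonneg (α := ℝ) n]
  have hseq_to : Tendsto (fun n : ℕ => 1 / ((n:ℝ) + 1)) atTop (𝓝 0) :=
    tendsto_one_div_add_atTop_nhds_zero_nat
  -- E ≤ I
  have hEleI : E ≤ I := by
    refine ge_of_tendsto (hDCT (fun n => 1 / (n + 1))
      (fun n => by rw [abs_of_pos (hseq_pos n)]; exact hseq_le n) hseq_to)
      (Eventually.of_forall fun n => ?_)
    set t := (1:ℝ) / (n + 1)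
    have ht0 := hseq_pos n
    have ht1 := hseq_le n
    have htabs : |t| ≤ 1 := by rw [abs_of_pos ht0]; exact ht1
    -- pointwise : ψ(S+tG) - ψ(S) ≤ q t G max(S+tG)^{q-1}
    have hup : ∫ z, (max (S z + t * G z) 0 ^ q - max (S z) 0 ^ q) ∂μ ≤
        ∫ z, q * t * (G z * max (S z + t * G z) 0 ^ (q - 1)) ∂μ := by
      refine integral_mono_ae ((hbase_int t htabs).sub hS0q) ?_ ?_
      · simpa [mul_assoc] using ((hGX_int t htabs).const_mul (q * t))
      · refine Eventually.of_forall fun z => ?_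
        have := maxRpow_grad hq (S z + t * G z) (S z)
        have harg : S z - (S z + t * G z) = -(t * G z) := by ring
        rw [harg] at this
        simp only [zero_mul, add_zero] at *
        nlinarith [this]
    have heq1 : ∫ z, (max (S z + t * G z) 0 ^ q - max (S z) 0 ^ q) ∂μ =
        (∫ z, max (S z + t * G z) 0 ^ q ∂μ) - ∫ z, max (S z) 0 ^ q ∂μ :=
      integral_sub (hbase_int t htabs) hS0q
    have heq2 : ∫ z, q * t * (G z * max (S z + t * G z) 0 ^ (q - 1)) ∂μ =
        (q * t) * ∫ z, G z * max (S z + t * G z) 0 ^ (q - 1) ∂μ :=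
      integral_const_mul _ _
    have hfin : q * (t * E) ≤ (q * t) * ∫ z, G z * max (S z + t * G z) 0 ^ (q - 1) ∂μ := by
      rw [← heq2]
      calc q * (t * E) ≤ _ := h1 t ht0 ht1
        _ = ∫ z, (max (S z + t * G z) 0 ^ q - max (S z) 0 ^ q) ∂μ := heq1.symm
        _ ≤ _ := hup
    have hqt : (0:ℝ) < q * t := by positivity
    have := (mul_le_mul_iff_right₀ hqt).mp (by linarith [hfin] :
      (q * t) * E ≤ (q * t) * ∫ z, G z * max (S z + t * G z) 0 ^ (q - 1) ∂μ)
    exact this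
  -- I ≤ E
  have hIleE : I ≤ E := by
    have htoneg : Tendsto (fun n : ℕ => -(1 / ((n:ℝ) + 1))) atTop (𝓝 0) := by
      simpa using hseq_to.neg
    refine le_of_tendsto (hDCT (fun n => -(1 / (n + 1)))
      (fun n => by rw [abs_neg, abs_of_pos (hseq_pos n)]; exact hseq_le n) htoneg)
      (Eventually.of_forall fun n => ?_)
    set t := (1:ℝ) / (n + 1)
    have ht0 := hseq_pos n
    have ht1 := hseq_le n
    have htabs : |(-t)| ≤ 1 := by rw [abs_neg, abs_of_pos ht0]; exact ht1
    have hdn : ∫ z, q * t * (G z * max (S z + (-t) * G z) 0 ^ (q - 1)) ∂μ ≤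
        ∫ z, (max (S z) 0 ^ q - max (S z + (-t) * G z) 0 ^ q) ∂μ := by
      refine integral_mono_ae
        (by simpa [mul_assoc] using ((hGX_int (-t) htabs).const_mul (q * t)))
        (hS0q.sub (hbase_int (-t) htabs)) ?_
      refine Eventually.of_forall fun z => ?_
      have := maxRpow_grad hq (S z + (-t) * G z) (S z)
      have harg : S z - (S z + (-t) * G z) = t * G z := by ring
      rw [harg] at this
      exact le_trans (le_of_eq (by ring)) this
    have heq1 : ∫ z, (max (S z) 0 ^ q - max (S z + (-t) * G z) 0 ^ q) ∂μ =
        (∫ z, max (S z) 0 ^ q ∂μ) - ∫ z, max (S z + (-t) * G z) 0 ^ q ∂μ :=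
      integral_sub hS0q (hbase_int (-t) htabs)
    have heq2 : ∫ z, q * t * (G z * max (S z + (-t) * G z) 0 ^ (q - 1)) ∂μ =
        (q * t) * ∫ z, G z * max (S z + (-t) * G z) 0 ^ (q - 1) ∂μ :=
      integral_const_mul _ _
    have hfin : (q * t) * ∫ z, G z * max (S z + (-t) * G z) 0 ^ (q - 1) ∂μ ≤ q * (t * E) := by
      rw [← heq2]
      calc ∫ z, q * t * (G z * max (S z + (-t) * G z) 0 ^ (q - 1)) ∂μ ≤ _ := hdn
        _ = (∫ z, max (S z) 0 ^ q ∂μ) - ∫ z, max (S z + (-t) * G z) 0 ^ q ∂μ := heq1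
        _ ≤ q * (t * E) := h2 t ht0 ht1
    have hqt : (0:ℝ) < q * t := by positivity
    exact (mul_le_mul_iff_right₀ hqt).mp (by linarith [hfin] :
      (q * t) * ∫ z, G z * max (S z + (-t) * G z) 0 ^ (q - 1) ∂μ ≤ (q * t) * E)
  linarith


lemma exists_bad_h {X : Type*} [MeasurableSpace X] (lam μ : Measure X)
    [IsFiniteMeasure lam] [IsFiniteMeasure μ] (hac : μ ≪ lam)
    (hub : ∀ R : ℝ, ¬ ∀ᵐ x ∂lam, (μ.rnDeriv lam x).toReal ≤ R) :
    ∃ h : X → ℝ, Measurable h ∧ (∀ x, 0 ≤ h x) ∧ Integrable h lam ∧ ¬ Integrable h μ := by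
  set ρ := μ.rnDeriv lam with hρdef
  have hρ : Measurable ρ := Measure.measurable_rnDeriv μ lam
  set A : ℕ → Set X := fun k => {x | (4:ℝ) ^ k < (ρ x).toReal} with hAdef
  have hAm : ∀ k, MeasurableSet (A k) :=
    fun k => measurableSet_lt measurable_const hρ.ennreal_toReal
  have hA0 : ∀ k, lam (A k) ≠ 0 := by
    intro k h0
    refine hub ((4:ℝ) ^ k) ?_
    rw [ae_iff]
    convert h0 using 2
    ext x
    simp [hAdef, not_le]
  have hAfin : ∀ k, lam (A k) ≠ ∞ := fun k => (measure_lt_top lam _).ne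
  set c : ℕ → ℝ≥0∞ := fun k => (2:ℝ≥0∞)⁻¹ ^ k / lam (A k) with hcdef
  have hcfin : ∀ k, c k ≠ ∞ := by
    intro k
    exact (ENNReal.div_lt_top (ENNReal.pow_ne_top (by simp)) (hA0 k)).ne
  set H : X → ℝ≥0∞ := fun x => ∑' k, (A k).indicator (fun _ => c k) x with hHdef
  have hHm : Measurable H :=
    Measurable.ennreal_tsum (fun k => measurable_const.indicator (hAm k))
  have hHint : ∫⁻ x, H x ∂lam = ∑' k, c k * lam (A k) := by
    rw [lintegral_tsum (fun k => (measurable_const.indicator (hAm k)).aemeasurable)]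
    congr 1; funext k
    rw [lintegral_indicator (hAm k), setLIntegral_const]
  have hck : ∀ k, c k * lam (A k) = (2:ℝ≥0∞)⁻¹ ^ k :=
    fun k => ENNReal.div_mul_cancel (hA0 k) (hAfin k)
  have hHfin : ∫⁻ x, H x ∂lam ≠ ∞ := by
    rw [hHint]
    simp only [hck]
    rw [ENNReal.tsum_geometric]
    have h2 : (2:ℝ≥0∞)⁻¹ < 1 := ENNReal.inv_lt_one.mpr one_lt_two
    exact ENNReal.inv_ne_top.mpr (ne_of_gt (tsub_pos_of_lt h2))
  refine ⟨fun x => (H x).toReal, hHm.ennreal_toReal, fun x => ENNReal.toReal_nonneg,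
    integrable_toReal_of_lintegral_ne_top hHm.aemeasurable hHfin, ?_⟩
  intro hint
  set N : Set X := H ⁻¹' {∞} with hNdef
  have hNm : MeasurableSet N := hHm (measurableSet_singleton ⊤)
  have hNnull : lam N = 0 := by
    have h := ae_lt_top hHm hHfin
    rw [ae_iff] at h
    refine measure_mono_null ?_ h
    intro x hx
    simp only [hNdef, mem_preimage, mem_singleton_iff] at hx
    simp [hx]
  have hμN : μ N = 0 := hac hNnull
  have hC : ∫⁻ x, (‖(H x).toReal‖₊ : ℝ≥0∞) ∂μ ≠ ∞ := hint.2.ne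
  have hlow : ∀ k : ℕ, (2:ℝ≥0∞) ^ k ≤ ∫⁻ x, (‖(H x).toReal‖₊ : ℝ≥0∞) ∂μ := by
    intro k
    have hsub : A k \ N ⊆ A k := diff_subset
    have hAk : μ (A k \ N) = μ (A k) := measure_diff_null hμN
    have hptw : ∀ x ∈ A k \ N, c k ≤ (‖(H x).toReal‖₊ : ℝ≥0∞) := by
      intro x hx
      have hxA : x ∈ A k := hx.1
      have hxH : H x < ∞ := by
        have := hx.2
        simp only [hNdef, mem_preimage, mem_singleton_iff] at this
        exact lt_top_iff_ne_top.mpr this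
      have h1 : c k ≤ H x := by
        have := ENNReal.le_tsum (f := fun k => (A k).indicator (fun _ => c k) x) k
        rwa [indicator_of_mem hxA] at this
      rw [← enorm_eq_nnnorm, Real.enorm_eq_ofReal ENNReal.toReal_nonneg]
      calc c k = ENNReal.ofReal (c k).toReal := (ENNReal.ofReal_toReal (hcfin k)).symm
        _ ≤ ENNReal.ofReal (H x).toReal :=
            ENNReal.ofReal_le_ofReal (ENNReal.toReal_mono hxH.ne h1)
    have hstep1 : c k * μ (A k) ≤ ∫⁻ x, (‖(H x).toReal‖₊ : ℝ≥0∞) ∂μ := by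
      calc c k * μ (A k) = c k * μ (A k \ N) := by rw [hAk]
        _ = ∫⁻ _ in A k \ N, c k ∂μ := (setLIntegral_const _ _).symm
        _ ≤ ∫⁻ x in A k \ N, (‖(H x).toReal‖₊ : ℝ≥0∞) ∂μ := by
            exact setLIntegral_mono' ((hAm k).diff hNm) hptw
        _ ≤ ∫⁻ x, (‖(H x).toReal‖₊ : ℝ≥0∞) ∂μ := setLIntegral_le_lintegral _ _
    have hstep2 : ENNReal.ofReal ((4:ℝ) ^ k) * lam (A k) ≤ μ (A k) := by
      have : μ (A k) = ∫⁻ x in A k, ρ x ∂lam := by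
        conv_lhs => rw [← Measure.withDensity_rnDeriv_eq μ lam hac]
        rw [withDensity_apply _ (hAm k)]
      rw [this, ← setLIntegral_const]
      refine setLIntegral_mono' (hAm k) ?_
      intro x hx
      have hxA : (4:ℝ) ^ k < (ρ x).toReal := hx
      have hne : ρ x ≠ ∞ := by
        intro he
        rw [he] at hxA
        simp at hxA
        nlinarith [pow_pos (by norm_num : (0:ℝ) < 4) k]
      calc ENNReal.ofReal ((4:ℝ) ^ k) ≤ ENNReal.ofReal (ρ x).toReal :=
            ENNReal.ofReal_le_ofReal hxA.le
        _ = ρ x := ENNReal.ofReal_toReal hne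
    calc (2:ℝ≥0∞) ^ k = ENNReal.ofReal ((4:ℝ) ^ k) * ((2:ℝ≥0∞)⁻¹) ^ k := by
          rw [ENNReal.ofReal_pow (by norm_num), ← mul_pow]
          congr 1
          rw [ENNReal.ofReal_ofNat,
            show (4:ℝ≥0∞) = 2 * 2 by norm_num, mul_assoc,
            ENNReal.mul_inv_cancel two_ne_zero ENNReal.ofNat_ne_top, mul_one]
      _ = ENNReal.ofReal ((4:ℝ) ^ k) * (c k * lam (A k)) := by rw [hck]
      _ = c k * (ENNReal.ofReal ((4:ℝ) ^ k) * lam (A k)) := by ring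
      _ ≤ c k * μ (A k) := mul_le_mul_right hstep2 _
      _ ≤ _ := hstep1
  obtain ⟨n, hn⟩ := ENNReal.exists_nat_gt hC
  have h2n : (n:ℝ≥0∞) ≤ (2:ℝ≥0∞) ^ n := by
    have := Nat.lt_two_pow_self (n := n)
    calc (n:ℝ≥0∞) ≤ ((2^n : ℕ) : ℝ≥0∞) := by exact_mod_cast this.le
      _ = (2:ℝ≥0∞) ^ n := by push_cast; rfl
  exact absurd ((h2n.trans (hlow n)).trans_lt hn) (lt_irrefl _)

lemma caseA_side1 {A B : Type*} [MeasurableSpace A] [MeasurableSpace B]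
    {lam₁ : Measure A} {lam₂ : Measure B} [IsFiniteMeasure lam₁] [IsFiniteMeasure lam₂]
    {μ₁ : Measure A} {μ₂ : Measure B} [IsProbabilityMeasure μ₂] [IsFiniteMeasure μ₁]
    {q γ cd : ℝ} (hq0 : 0 < q) (hγ : 0 < γ ^ (q - 1))
    {c : A × B → ℝ} (hc : ∀ z, cd ≤ c z)
    {h : A → ℝ} (h0 : ∀ x, 0 ≤ h x) (hint : Integrable h lam₁)
    (hnint : ¬ Integrable h μ₁)
    {a₁ : A → ℝ} {a₂ : B → ℝ}
    (hopt : ∀ (α₁ : A → ℝ) (α₂ : B → ℝ), PdaggerFeasible q c lam₁ lam₂ α₁ α₂ →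
      LambdaValue q γ c (lam₁.prod lam₂) μ₁ μ₂ a₁ a₂ ≤
        LambdaValue q γ c (lam₁.prod lam₂) μ₁ μ₂ α₁ α₂) : False := by
  set L := LambdaValue q γ c (lam₁.prod lam₂) μ₁ μ₂ a₁ a₂ with hL
  set s : ℝ := (|L| + 1) / γ ^ (q - 1) with hs
  set α₁ : A → ℝ := fun x => (cd - s) - h x with hα₁
  set α₂ : B → ℝ := fun _ => s with hα₂
  have hzero : (fun z : A × B => max (α₁ z.1 + α₂ z.2 - c z) 0) = fun _ => (0:ℝ) := by
    funext z
    rw [max_eq_right]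
    have h1 := hc z; have h2 := h0 z.1
    simp only [hα₁, hα₂]
    linarith
  have hfeas : PdaggerFeasible q c lam₁ lam₂ α₁ α₂ := by
    refine ⟨(integrable_const _).sub hint, integrable_const _, ?_⟩
    rw [hzero]
    exact memLp_const 0
  have hval : LambdaValue q γ c (lam₁.prod lam₂) μ₁ μ₂ α₁ α₂ = -(|L| + 1) := by
    unfold LambdaValue
    have h1 : (∫ z, (max (α₁ z.1 + α₂ z.2 - c z) 0) ^ q ∂(lam₁.prod lam₂)) = 0 := by
      have hz : ∀ z : A × B, (max (α₁ z.1 + α₂ z.2 - c z) 0 : ℝ) ^ q = 0 := by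
        intro z
        rw [congrFun hzero z, Real.zero_rpow hq0.ne']
      rw [show (fun z : A × B => (max (α₁ z.1 + α₂ z.2 - c z) 0 : ℝ) ^ q) = fun _ => (0:ℝ)
        from funext hz]
      exact integral_zero _ _
    have h2 : ∫ x, α₁ x ∂μ₁ = 0 := by
      refine integral_undef fun hI => hnint ?_
      have heq : h = fun x => (cd - s) - α₁ x := by funext x; simp only [hα₁]; ring
      rw [heq]
      exact (integrable_const _).sub hI
    have h3 : ∫ y, α₂ y ∂μ₂ = s := by
      simp only [hα₂, integral_const, probReal_univ, one_smul]
    rw [h1, h2, h3, hs]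
    field_simp
    ring
  have hle := hopt α₁ α₂ hfeas
  rw [hval] at hle
  have := abs_nonneg L
  have := neg_abs_le L
  linarith

lemma caseA_side2 {A B : Type*} [MeasurableSpace A] [MeasurableSpace B]
    {lam₁ : Measure A} {lam₂ : Measure B} [IsFiniteMeasure lam₁] [IsFiniteMeasure lam₂]
    {μ₁ : Measure A} {μ₂ : Measure B} [IsProbabilityMeasure μ₁] [IsFiniteMeasure μ₂]
    {q γ cd : ℝ} (hq0 : 0 < q) (hγ : 0 < γ ^ (q - 1))
    {c : A × B → ℝ} (hc : ∀ z, cd ≤ c z)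
    {h : B → ℝ} (h0 : ∀ x, 0 ≤ h x) (hint : Integrable h lam₂)
    (hnint : ¬ Integrable h μ₂)
    {a₁ : A → ℝ} {a₂ : B → ℝ}
    (hopt : ∀ (α₁ : A → ℝ) (α₂ : B → ℝ), PdaggerFeasible q c lam₁ lam₂ α₁ α₂ →
      LambdaValue q γ c (lam₁.prod lam₂) μ₁ μ₂ a₁ a₂ ≤
        LambdaValue q γ c (lam₁.prod lam₂) μ₁ μ₂ α₁ α₂) : False := by
  set L := LambdaValue q γ c (lam₁.prod lam₂) μ₁ μ₂ a₁ a₂ with hL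
  set s : ℝ := (|L| + 1) / γ ^ (q - 1) with hs
  set α₁ : A → ℝ := fun _ => s with hα₁
  set α₂ : B → ℝ := fun y => (cd - s) - h y with hα₂
  have hzero : (fun z : A × B => max (α₁ z.1 + α₂ z.2 - c z) 0) = fun _ => (0:ℝ) := by
    funext z
    rw [max_eq_right]
    have h1 := hc z; have h2 := h0 z.2
    simp only [hα₁, hα₂]
    linarith
  have hfeas : PdaggerFeasible q c lam₁ lam₂ α₁ α₂ := by
    refine ⟨integrable_const _, (integrable_const _).sub hint, ?_⟩
    rw [hzero]
    exact memLp_const 0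
  have hval : LambdaValue q γ c (lam₁.prod lam₂) μ₁ μ₂ α₁ α₂ = -(|L| + 1) := by
    unfold LambdaValue
    have h1 : (∫ z, (max (α₁ z.1 + α₂ z.2 - c z) 0) ^ q ∂(lam₁.prod lam₂)) = 0 := by
      have hz : ∀ z : A × B, (max (α₁ z.1 + α₂ z.2 - c z) 0 : ℝ) ^ q = 0 := by
        intro z
        rw [congrFun hzero z, Real.zero_rpow hq0.ne']
      rw [show (fun z : A × B => (max (α₁ z.1 + α₂ z.2 - c z) 0 : ℝ) ^ q) = fun _ => (0:ℝ)
        from funext hz]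
      exact integral_zero _ _
    have h2 : ∫ y, α₂ y ∂μ₂ = 0 := by
      refine integral_undef fun hI => hnint ?_
      have heq : h = fun y => (cd - s) - α₂ y := by funext y; simp only [hα₂]; ring
      rw [heq]
      exact (integrable_const _).sub hI
    have h3 : ∫ x, α₁ x ∂μ₁ = s := by
      simp only [hα₁, integral_const, probReal_univ, one_smul]
    rw [h1, h2, h3, hs]
    field_simp
    ring
  have hle := hopt α₁ α₂ hfeas
  rw [hval] at hle
  have := abs_nonneg L
  have := neg_abs_le L
  linarith

lemma integrable_maxRpow_qsub1 {Z : Type*} [MeasurableSpace Z] {μ : Measure Z}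
    [IsFiniteMeasure μ] {q : ℝ} (hq : 1 < q) {S : Z → ℝ}
    (hS : AEStronglyMeasurable S μ)
    (hSq : MemLp (fun z => max (S z) 0) (ENNReal.ofReal q) μ) :
    Integrable (fun z => max (S z) 0 ^ (q - 1)) μ := by
  have hq0 : (0:ℝ) < q := by linarith
  have hq1 : (0:ℝ) < q - 1 := by linarith
  have hYint : Integrable (fun z => (max (S z) 0 + 1) ^ q) μ :=
    integrable_rpow_of_memLp hq0 (hSq.add (memLp_const 1)) (fun z => by positivity)
  refine hYint.mono ((continuous_maxRpow hq1.le).comp_aestronglyMeasurable hS)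
    (Eventually.of_forall fun z => ?_)
  have hb : (0:ℝ) ≤ max (S z) 0 := le_max_right _ _
  have hb1 : (1:ℝ) ≤ max (S z) 0 + 1 := by linarith
  rw [Real.norm_eq_abs, Real.norm_eq_abs, abs_of_nonneg (Real.rpow_nonneg hb _),
    abs_of_nonneg (Real.rpow_nonneg (by positivity) _)]
  calc max (S z) 0 ^ (q - 1) ≤ (max (S z) 0 + 1) ^ (q - 1) :=
        Real.rpow_le_rpow hb (by linarith) hq1.le
    _ ≤ (max (S z) 0 + 1) ^ q := Real.rpow_le_rpow_of_exponent_le hb1 (by linarith)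

lemma EL_key {A B : Type*} [MeasurableSpace A] [MeasurableSpace B]
    {lam₁ : Measure A} {lam₂ : Measure B} [IsFiniteMeasure lam₁] [IsFiniteMeasure lam₂]
    {μ₁ : Measure A} {μ₂ : Measure B} [IsFiniteMeasure μ₁] [IsFiniteMeasure μ₂]
    (hμ₁ : μ₁ ≪ lam₁)
    {q γ : ℝ} (hq : 1 < q) (hγ : 0 < γ)
    {c : A × B → ℝ} (hcm : AEStronglyMeasurable c (lam₁.prod lam₂))
    {R₁ : ℝ} (hR₁ : ∀ᵐ x ∂lam₁, (μ₁.rnDeriv lam₁ x).toReal ≤ R₁)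
    {a₁ : A → ℝ} {a₂ : B → ℝ}
    (hfeas : PdaggerFeasible q c lam₁ lam₂ a₁ a₂)
    (hopt : ∀ (α₁ : A → ℝ) (α₂ : B → ℝ), PdaggerFeasible q c lam₁ lam₂ α₁ α₂ →
      LambdaValue q γ c (lam₁.prod lam₂) μ₁ μ₂ a₁ a₂ ≤
        LambdaValue q γ c (lam₁.prod lam₂) μ₁ μ₂ α₁ α₂)
    {g : A → ℝ} (hgm : Measurable g) (hgb : ∀ x, |g x| ≤ 1) :
    ∫ z, g z.1 * max (a₁ z.1 + a₂ z.2 - c z) 0 ^ (q - 1) ∂(lam₁.prod lam₂) =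
      γ ^ (q - 1) * ∫ x, g x ∂μ₁ := by
  have hq0 : (0:ℝ) < q := by linarith
  set S : A × B → ℝ := fun z => a₁ z.1 + a₂ z.2 - c z with hSdef
  have hS : AEStronglyMeasurable S (lam₁.prod lam₂) := by
    refine AEStronglyMeasurable.sub (AEStronglyMeasurable.add ?_ ?_) hcm
    · exact hfeas.1.aestronglyMeasurable.comp_quasiMeasurePreserving
        Measure.quasiMeasurePreserving_fst
    · exact hfeas.2.1.aestronglyMeasurable.comp_quasiMeasurePreserving
        Measure.quasiMeasurePreserving_snd
  have hSq : MemLp (fun z => max (S z) 0) (ENNReal.ofReal q) (lam₁.prod lam₂) := hfeas.2.2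
  have ha₁μ : Integrable a₁ μ₁ := integrable_of_density_bound hμ₁ hR₁ hfeas.1
  have hgint_lam : Integrable g lam₁ := by
    refine (integrable_const (1:ℝ)).mono' hgm.aestronglyMeasurable
      (Eventually.of_forall fun x => ?_)
    rw [Real.norm_eq_abs]
    simpa using hgb x
  have hgμ : Integrable g μ₁ := by
    refine (integrable_const (1:ℝ)).mono' (hgm.aestronglyMeasurable.mono_ac hμ₁)
      (Eventually.of_forall fun x => ?_)
    rw [Real.norm_eq_abs]
    simpa using hgb x
  set G : A × B → ℝ := fun z => g z.1 with hGdef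
  have hG : AEStronglyMeasurable G (lam₁.prod lam₂) :=
    (hgm.comp measurable_fst).aestronglyMeasurable
  have hGb : ∀ z : A × B, |G z| ≤ 1 := fun z => hgb z.1
  -- feasibility of perturbations
  have hfeas_t : ∀ t : ℝ, |t| ≤ 1 →
      PdaggerFeasible q c lam₁ lam₂ (fun x => a₁ x + t * g x) a₂ := by
    intro t ht
    refine ⟨hfeas.1.add (hgint_lam.const_mul t), hfeas.2.1, ?_⟩
    have hfe : (fun z : A × B => max ((a₁ z.1 + t * g z.1) + a₂ z.2 - c z) 0) =
        fun z => max (S z + t * G z) 0 := by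
      funext z
      congr 1
      simp only [hSdef, hGdef]
      ring
    rw [hfe]
    refine MemLp.of_le (hSq.add (memLp_const 1))
      ((continuous_id.max continuous_const).comp_aestronglyMeasurable
        (hS.add (hG.const_mul t))) (Eventually.of_forall fun z => ?_)
    have h1 : |t * G z| ≤ 1 := by
      rw [abs_mul]
      calc |t| * |G z| ≤ 1 * 1 := mul_le_mul ht (hGb z) (abs_nonneg _) zero_le_one
        _ = 1 := mul_one 1
    have hb : max (S z + t * G z) 0 ≤ max (S z) 0 + 1 := by
      refine max_le ?_ (by positivity)
      have h2 := le_max_left (S z) 0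
      linarith [abs_le.mp h1]
    simp only [Pi.add_apply, Real.norm_eq_abs]
    rw [abs_of_nonneg (le_max_right (S z + t * G z) (0:ℝ)),
      abs_of_nonneg (by positivity : (0:ℝ) ≤ max (S z) 0 + 1)]
    exact hb
  have hψ : ∀ t : ℝ,
      (∫ z, (max ((a₁ z.1 + t * g z.1) + a₂ z.2 - c z) 0) ^ q ∂(lam₁.prod lam₂))
      = ∫ z, max (S z + t * G z) 0 ^ q ∂(lam₁.prod lam₂) := by
    intro t
    refine integral_congr_ae (Eventually.of_forall fun z => ?_)
    congr 2
    simp only [hSdef, hGdef]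
    ring
  have hμint : ∀ t : ℝ, ∫ x, (a₁ x + t * g x) ∂μ₁ = (∫ x, a₁ x ∂μ₁) + t * ∫ x, g x ∂μ₁ := by
    intro t
    rw [integral_add ha₁μ (hgμ.const_mul t), integral_const_mul]
  set Ig := ∫ x, g x ∂μ₁ with hIg
  set Ia := ∫ x, a₁ x ∂μ₁ with hIa
  set E := γ ^ (q - 1) * Ig with hE
  set P := ∫ z, max (S z) 0 ^ q ∂(lam₁.prod lam₂) with hP
  have h1 : ∀ t : ℝ, 0 < t → t ≤ 1 →
      q * (t * E) ≤ (∫ z, max (S z + t * G z) 0 ^ q ∂(lam₁.prod lam₂)) - P := by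
    intro t ht0 ht1
    have habs : |t| ≤ 1 := by rw [abs_of_pos ht0]; exact ht1
    have hle := hopt _ _ (hfeas_t t habs)
    unfold LambdaValue at hle
    rw [hψ t, hμint t, mul_add] at hle
    set P' := ∫ z, max (S z + t * G z) 0 ^ q ∂(lam₁.prod lam₂) with hP'
    have hstep : γ ^ (q - 1) * (t * Ig) ≤ 1 / q * P' - 1 / q * P := by linarith
    calc q * (t * E) = q * (γ ^ (q - 1) * (t * Ig)) := by rw [hE]; ring
      _ ≤ q * (1 / q * P' - 1 / q * P) := mul_le_mul_of_nonneg_left hstep hq0.le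
      _ = P' - P := by field_simp
  have h2 : ∀ t : ℝ, 0 < t → t ≤ 1 →
      P - (∫ z, max (S z + (-t) * G z) 0 ^ q ∂(lam₁.prod lam₂)) ≤ q * (t * E) := by
    intro t ht0 ht1
    have habs : |(-t)| ≤ 1 := by rw [abs_neg, abs_of_pos ht0]; exact ht1
    have hle := hopt _ _ (hfeas_t (-t) habs)
    unfold LambdaValue at hle
    rw [hψ (-t), hμint (-t), mul_add] at hle
    set P'' := ∫ z, max (S z + (-t) * G z) 0 ^ q ∂(lam₁.prod lam₂) with hP''
    have hstep : 1 / q * P - 1 / q * P'' ≤ γ ^ (q - 1) * (-t * Ig) + 2 * (γ ^ (q - 1) * (t * Ig)) := by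
      nlinarith [hle]
    have hstep2 : 1 / q * P - 1 / q * P'' ≤ γ ^ (q - 1) * (t * Ig) := by nlinarith [hle]
    calc P - P'' = q * (1 / q * P - 1 / q * P'') := by field_simp
      _ ≤ q * (γ ^ (q - 1) * (t * Ig)) := mul_le_mul_of_nonneg_left hstep2 hq0.le
      _ = q * (t * E) := by rw [hE]; ring
  exact core_EL (lam₁.prod lam₂) hq hS hSq hG hGb h1 h2

lemma EL_side1 {A B : Type*} [MeasurableSpace A] [MeasurableSpace B]
    {lam₁ : Measure A} {lam₂ : Measure B} [IsFiniteMeasure lam₁] [IsFiniteMeasure lam₂]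
    {μ₁ : Measure A} {μ₂ : Measure B} [IsFiniteMeasure μ₁] [IsFiniteMeasure μ₂]
    (hμ₁ : μ₁ ≪ lam₁)
    {q γ : ℝ} (hq : 1 < q) (hγ : 0 < γ)
    {c : A × B → ℝ} (hcm : AEStronglyMeasurable c (lam₁.prod lam₂))
    {R₁ : ℝ} (hR₁ : ∀ᵐ x ∂lam₁, (μ₁.rnDeriv lam₁ x).toReal ≤ R₁)
    {a₁ : A → ℝ} {a₂ : B → ℝ}
    (hfeas : PdaggerFeasible q c lam₁ lam₂ a₁ a₂)
    (hopt : ∀ (α₁ : A → ℝ) (α₂ : B → ℝ), PdaggerFeasible q c lam₁ lam₂ α₁ α₂ →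
      LambdaValue q γ c (lam₁.prod lam₂) μ₁ μ₂ a₁ a₂ ≤
        LambdaValue q γ c (lam₁.prod lam₂) μ₁ μ₂ α₁ α₂) :
    (fun x₁ => ∫ x₂, max (a₁ x₁ + a₂ x₂ - c (x₁, x₂)) 0 ^ (q - 1) ∂lam₂) =ᵐ[lam₁]
      fun x₁ => γ ^ (q - 1) * (μ₁.rnDeriv lam₁ x₁).toReal := by
  have hS : AEStronglyMeasurable (fun z : A × B => a₁ z.1 + a₂ z.2 - c z) (lam₁.prod lam₂) := by
    refine AEStronglyMeasurable.sub (AEStronglyMeasurable.add ?_ ?_) hcm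
    · exact hfeas.1.aestronglyMeasurable.comp_quasiMeasurePreserving
        Measure.quasiMeasurePreserving_fst
    · exact hfeas.2.1.aestronglyMeasurable.comp_quasiMeasurePreserving
        Measure.quasiMeasurePreserving_snd
  have hTint : Integrable (fun z : A × B => max (a₁ z.1 + a₂ z.2 - c z) 0 ^ (q - 1))
      (lam₁.prod lam₂) := integrable_maxRpow_qsub1 hq hS hfeas.2.2
  have hFint : Integrable (fun x => ∫ y, max (a₁ x + a₂ y - c (x, y)) 0 ^ (q - 1) ∂lam₂) lam₁ :=
    hTint.integral_prod_left
  have hρint : Integrable (fun x => γ ^ (q - 1) * (μ₁.rnDeriv lam₁ x).toReal) lam₁ :=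
    (Measure.integrable_toReal_rnDeriv).const_mul _
  refine Integrable.ae_eq_of_forall_setIntegral_eq _ _ hFint hρint ?_
  intro s hs _
  have hgm : Measurable (s.indicator (fun _ => (1:ℝ))) := measurable_const.indicator hs
  have hgb : ∀ x, |s.indicator (fun _ => (1:ℝ)) x| ≤ 1 := by
    intro x
    by_cases h : x ∈ s <;> simp [indicator_of_mem, indicator_of_notMem, h]
  have hkey := EL_key hμ₁ hq hγ hcm hR₁ hfeas hopt hgm hgb
  have hprodres : (lam₁.restrict s).prod lam₂ = (lam₁.prod lam₂).restrict (s ×ˢ univ) := by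
    rw [← Measure.prod_restrict s univ, Measure.restrict_univ]
  have hL : ∫ z, s.indicator (fun _ => (1:ℝ)) z.1 *
        max (a₁ z.1 + a₂ z.2 - c z) 0 ^ (q - 1) ∂(lam₁.prod lam₂)
      = ∫ x in s, ∫ y, max (a₁ x + a₂ y - c (x, y)) 0 ^ (q - 1) ∂lam₂ ∂lam₁ := by
    have hind : (fun z : A × B => s.indicator (fun _ => (1:ℝ)) z.1 *
          max (a₁ z.1 + a₂ z.2 - c z) 0 ^ (q - 1))
        = (s ×ˢ univ).indicator
            (fun z : A × B => max (a₁ z.1 + a₂ z.2 - c z) 0 ^ (q - 1)) := by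
      funext z
      by_cases h : z.1 ∈ s
      · rw [indicator_of_mem h, one_mul, indicator_of_mem (show z ∈ s ×ˢ univ from ⟨h, mem_univ _⟩)]
      · rw [indicator_of_notMem h, zero_mul,
          indicator_of_notMem (show z ∉ s ×ˢ univ from fun hz => h hz.1)]
    rw [hind, integral_indicator (hs.prod MeasurableSet.univ), ← hprodres]
    have hres : Integrable (fun z : A × B => max (a₁ z.1 + a₂ z.2 - c z) 0 ^ (q - 1))
        ((lam₁.restrict s).prod lam₂) := by
      rw [hprodres]
      exact hTint.integrableOn
    exact integral_prod _ hres
  have hR : γ ^ (q - 1) * ∫ x, s.indicator (fun _ => (1:ℝ)) x ∂μ₁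
      = ∫ x in s, γ ^ (q - 1) * (μ₁.rnDeriv lam₁ x).toReal ∂lam₁ := by
    rw [integral_indicator_const (1:ℝ) hs, integral_const_mul,
      Measure.setIntegral_toReal_rnDeriv' hμ₁ hs]
    simp
  rw [← hL, ← hR]
  exact hkey

lemma EL_key2 {A B : Type*} [MeasurableSpace A] [MeasurableSpace B]
    {lam₁ : Measure A} {lam₂ : Measure B} [IsFiniteMeasure lam₁] [IsFiniteMeasure lam₂]
    {μ₁ : Measure A} {μ₂ : Measure B} [IsFiniteMeasure μ₁] [IsFiniteMeasure μ₂]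
    (hμ₂ : μ₂ ≪ lam₂)
    {q γ : ℝ} (hq : 1 < q)
    {c : A × B → ℝ} (hcm : AEStronglyMeasurable c (lam₁.prod lam₂))
    {R₂ : ℝ} (hR₂ : ∀ᵐ y ∂lam₂, (μ₂.rnDeriv lam₂ y).toReal ≤ R₂)
    {a₁ : A → ℝ} {a₂ : B → ℝ}
    (hfeas : PdaggerFeasible q c lam₁ lam₂ a₁ a₂)
    (hopt : ∀ (α₁ : A → ℝ) (α₂ : B → ℝ), PdaggerFeasible q c lam₁ lam₂ α₁ α₂ →
      LambdaValue q γ c (lam₁.prod lam₂) μ₁ μ₂ a₁ a₂ ≤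
        LambdaValue q γ c (lam₁.prod lam₂) μ₁ μ₂ α₁ α₂)
    {g : B → ℝ} (hgm : Measurable g) (hgb : ∀ y, |g y| ≤ 1) :
    ∫ z, g z.2 * max (a₁ z.1 + a₂ z.2 - c z) 0 ^ (q - 1) ∂(lam₁.prod lam₂) =
      γ ^ (q - 1) * ∫ y, g y ∂μ₂ := by
  have hq0 : (0:ℝ) < q := by linarith
  set S : A × B → ℝ := fun z => a₁ z.1 + a₂ z.2 - c z with hSdef
  have hS : AEStronglyMeasurable S (lam₁.prod lam₂) := by
    refine AEStronglyMeasurable.sub (AEStronglyMeasurable.add ?_ ?_) hcm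
    · exact hfeas.1.aestronglyMeasurable.comp_quasiMeasurePreserving
        Measure.quasiMeasurePreserving_fst
    · exact hfeas.2.1.aestronglyMeasurable.comp_quasiMeasurePreserving
        Measure.quasiMeasurePreserving_snd
  have hSq : MemLp (fun z => max (S z) 0) (ENNReal.ofReal q) (lam₁.prod lam₂) := hfeas.2.2
  have ha₂μ : Integrable a₂ μ₂ := integrable_of_density_bound hμ₂ hR₂ hfeas.2.1
  have hgint_lam : Integrable g lam₂ := by
    refine (integrable_const (1:ℝ)).mono' hgm.aestronglyMeasurable
      (Eventually.of_forall fun x => ?_)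
    rw [Real.norm_eq_abs]
    simpa using hgb x
  have hgμ : Integrable g μ₂ := by
    refine (integrable_const (1:ℝ)).mono' (hgm.aestronglyMeasurable.mono_ac hμ₂)
      (Eventually.of_forall fun x => ?_)
    rw [Real.norm_eq_abs]
    simpa using hgb x
  set G : A × B → ℝ := fun z => g z.2 with hGdef
  have hG : AEStronglyMeasurable G (lam₁.prod lam₂) :=
    (hgm.comp measurable_snd).aestronglyMeasurable
  have hGb : ∀ z : A × B, |G z| ≤ 1 := fun z => hgb z.2
  have hfeas_t : ∀ t : ℝ, |t| ≤ 1 →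
      PdaggerFeasible q c lam₁ lam₂ a₁ (fun y => a₂ y + t * g y) := by
    intro t ht
    refine ⟨hfeas.1, hfeas.2.1.add (hgint_lam.const_mul t), ?_⟩
    have hfe : (fun z : A × B => max (a₁ z.1 + (a₂ z.2 + t * g z.2) - c z) 0) =
        fun z => max (S z + t * G z) 0 := by
      funext z
      congr 1
      simp only [hSdef, hGdef]
      ring
    rw [hfe]
    refine MemLp.of_le (hSq.add (memLp_const 1))
      ((continuous_id.max continuous_const).comp_aestronglyMeasurable
        (hS.add (hG.const_mul t))) (Eventually.of_forall fun z => ?_)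
    have h1 : |t * G z| ≤ 1 := by
      rw [abs_mul]
      calc |t| * |G z| ≤ 1 * 1 := mul_le_mul ht (hGb z) (abs_nonneg _) zero_le_one
        _ = 1 := mul_one 1
    have hb : max (S z + t * G z) 0 ≤ max (S z) 0 + 1 := by
      refine max_le ?_ (by positivity)
      have h2 := le_max_left (S z) 0
      linarith [abs_le.mp h1]
    simp only [Pi.add_apply, Real.norm_eq_abs]
    rw [abs_of_nonneg (le_max_right (S z + t * G z) (0:ℝ)),
      abs_of_nonneg (by positivity : (0:ℝ) ≤ max (S z) 0 + 1)]
    exact hb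
  have hψ : ∀ t : ℝ,
      (∫ z, (max (a₁ z.1 + (a₂ z.2 + t * g z.2) - c z) 0) ^ q ∂(lam₁.prod lam₂))
      = ∫ z, max (S z + t * G z) 0 ^ q ∂(lam₁.prod lam₂) := by
    intro t
    refine integral_congr_ae (Eventually.of_forall fun z => ?_)
    congr 2
    simp only [hSdef, hGdef]
    ring
  have hμint : ∀ t : ℝ, ∫ y, (a₂ y + t * g y) ∂μ₂ = (∫ y, a₂ y ∂μ₂) + t * ∫ y, g y ∂μ₂ := by
    intro t
    rw [integral_add ha₂μ (hgμ.const_mul t), integral_const_mul]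
  set Ig := ∫ y, g y ∂μ₂ with hIg
  set Ia := ∫ y, a₂ y ∂μ₂ with hIa
  set E := γ ^ (q - 1) * Ig with hE
  set P := ∫ z, max (S z) 0 ^ q ∂(lam₁.prod lam₂) with hP
  have h1 : ∀ t : ℝ, 0 < t → t ≤ 1 →
      q * (t * E) ≤ (∫ z, max (S z + t * G z) 0 ^ q ∂(lam₁.prod lam₂)) - P := by
    intro t ht0 ht1
    have habs : |t| ≤ 1 := by rw [abs_of_pos ht0]; exact ht1
    have hle := hopt _ _ (hfeas_t t habs)
    unfold LambdaValue at hle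
    rw [hψ t, hμint t, mul_add] at hle
    set P' := ∫ z, max (S z + t * G z) 0 ^ q ∂(lam₁.prod lam₂) with hP'
    have hstep : γ ^ (q - 1) * (t * Ig) ≤ 1 / q * P' - 1 / q * P := by linarith
    calc q * (t * E) = q * (γ ^ (q - 1) * (t * Ig)) := by rw [hE]; ring
      _ ≤ q * (1 / q * P' - 1 / q * P) := mul_le_mul_of_nonneg_left hstep hq0.le
      _ = P' - P := by field_simp
  have h2 : ∀ t : ℝ, 0 < t → t ≤ 1 →
      P - (∫ z, max (S z + (-t) * G z) 0 ^ q ∂(lam₁.prod lam₂)) ≤ q * (t * E) := by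
    intro t ht0 ht1
    have habs : |(-t)| ≤ 1 := by rw [abs_neg, abs_of_pos ht0]; exact ht1
    have hle := hopt _ _ (hfeas_t (-t) habs)
    unfold LambdaValue at hle
    rw [hψ (-t), hμint (-t), mul_add] at hle
    set P'' := ∫ z, max (S z + (-t) * G z) 0 ^ q ∂(lam₁.prod lam₂) with hP''
    have hstep2 : 1 / q * P - 1 / q * P'' ≤ γ ^ (q - 1) * (t * Ig) := by nlinarith [hle]
    calc P - P'' = q * (1 / q * P - 1 / q * P'') := by field_simp
      _ ≤ q * (γ ^ (q - 1) * (t * Ig)) := mul_le_mul_of_nonneg_left hstep2 hq0.le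
      _ = q * (t * E) := by rw [hE]; ring
  exact core_EL (lam₁.prod lam₂) hq hS hSq hG hGb h1 h2

lemma EL_side2 {A B : Type*} [MeasurableSpace A] [MeasurableSpace B]
    {lam₁ : Measure A} {lam₂ : Measure B} [IsFiniteMeasure lam₁] [IsFiniteMeasure lam₂]
    {μ₁ : Measure A} {μ₂ : Measure B} [IsFiniteMeasure μ₁] [IsFiniteMeasure μ₂]
    (hμ₂ : μ₂ ≪ lam₂)
    {q γ : ℝ} (hq : 1 < q)
    {c : A × B → ℝ} (hcm : AEStronglyMeasurable c (lam₁.prod lam₂))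
    {R₂ : ℝ} (hR₂ : ∀ᵐ y ∂lam₂, (μ₂.rnDeriv lam₂ y).toReal ≤ R₂)
    {a₁ : A → ℝ} {a₂ : B → ℝ}
    (hfeas : PdaggerFeasible q c lam₁ lam₂ a₁ a₂)
    (hopt : ∀ (α₁ : A → ℝ) (α₂ : B → ℝ), PdaggerFeasible q c lam₁ lam₂ α₁ α₂ →
      LambdaValue q γ c (lam₁.prod lam₂) μ₁ μ₂ a₁ a₂ ≤
        LambdaValue q γ c (lam₁.prod lam₂) μ₁ μ₂ α₁ α₂) :
    (fun x₂ => ∫ x₁, max (a₁ x₁ + a₂ x₂ - c (x₁, x₂)) 0 ^ (q - 1) ∂lam₁) =ᵐ[lam₂]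
      fun x₂ => γ ^ (q - 1) * (μ₂.rnDeriv lam₂ x₂).toReal := by
  have hS : AEStronglyMeasurable (fun z : A × B => a₁ z.1 + a₂ z.2 - c z) (lam₁.prod lam₂) := by
    refine AEStronglyMeasurable.sub (AEStronglyMeasurable.add ?_ ?_) hcm
    · exact hfeas.1.aestronglyMeasurable.comp_quasiMeasurePreserving
        Measure.quasiMeasurePreserving_fst
    · exact hfeas.2.1.aestronglyMeasurable.comp_quasiMeasurePreserving
        Measure.quasiMeasurePreserving_snd
  have hTint : Integrable (fun z : A × B => max (a₁ z.1 + a₂ z.2 - c z) 0 ^ (q - 1))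
      (lam₁.prod lam₂) := integrable_maxRpow_qsub1 hq hS hfeas.2.2
  have hFint : Integrable (fun y => ∫ x, max (a₁ x + a₂ y - c (x, y)) 0 ^ (q - 1) ∂lam₁) lam₂ :=
    hTint.integral_prod_right
  have hρint : Integrable (fun y => γ ^ (q - 1) * (μ₂.rnDeriv lam₂ y).toReal) lam₂ :=
    (Measure.integrable_toReal_rnDeriv).const_mul _
  refine Integrable.ae_eq_of_forall_setIntegral_eq _ _ hFint hρint ?_
  intro s hs _
  have hgm : Measurable (s.indicator (fun _ => (1:ℝ))) := measurable_const.indicator hs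
  have hgb : ∀ y, |s.indicator (fun _ => (1:ℝ)) y| ≤ 1 := by
    intro y
    by_cases h : y ∈ s <;> simp [indicator_of_mem, indicator_of_notMem, h]
  have hkey := EL_key2 (μ₁ := μ₁) hμ₂ hq hcm hR₂ hfeas hopt hgm hgb
  have hprodres : lam₁.prod (lam₂.restrict s) = (lam₁.prod lam₂).restrict (univ ×ˢ s) := by
    rw [← Measure.prod_restrict univ s, Measure.restrict_univ]
  have hL : ∫ z, s.indicator (fun _ => (1:ℝ)) z.2 *
        max (a₁ z.1 + a₂ z.2 - c z) 0 ^ (q - 1) ∂(lam₁.prod lam₂)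
      = ∫ y in s, ∫ x, max (a₁ x + a₂ y - c (x, y)) 0 ^ (q - 1) ∂lam₁ ∂lam₂ := by
    have hind : (fun z : A × B => s.indicator (fun _ => (1:ℝ)) z.2 *
          max (a₁ z.1 + a₂ z.2 - c z) 0 ^ (q - 1))
        = (univ ×ˢ s).indicator
            (fun z : A × B => max (a₁ z.1 + a₂ z.2 - c z) 0 ^ (q - 1)) := by
      funext z
      by_cases h : z.2 ∈ s
      · rw [indicator_of_mem h, one_mul,
          indicator_of_mem (show z ∈ univ ×ˢ s from ⟨mem_univ _, h⟩)]
      · rw [indicator_of_notMem h, zero_mul,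
          indicator_of_notMem (show z ∉ univ ×ˢ s from fun hz => h hz.2)]
    rw [hind, integral_indicator (MeasurableSet.univ.prod hs), ← hprodres]
    have hres : Integrable (fun z : A × B => max (a₁ z.1 + a₂ z.2 - c z) 0 ^ (q - 1))
        (lam₁.prod (lam₂.restrict s)) := by
      rw [hprodres]
      exact hTint.integrableOn
    exact integral_prod_symm _ hres
  have hR : γ ^ (q - 1) * ∫ y, s.indicator (fun _ => (1:ℝ)) y ∂μ₂
      = ∫ y in s, γ ^ (q - 1) * (μ₂.rnDeriv lam₂ y).toReal ∂lam₂ := by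
    rw [integral_indicator_const (1:ℝ) hs, integral_const_mul,
      Measure.setIntegral_toReal_rnDeriv' hμ₂ hs]
    simp
  rw [← hL, ← hR]
  exact hkey


lemma upper_bound_of_marginal {B : Type*} [MeasurableSpace B]
    {lam₂ : Measure B} [IsFiniteMeasure lam₂]
    {q : ℝ} (hq : 1 < q) {F : B → ℝ} {u K D : ℝ}
    {s : Set B} (hsp : 0 < (lam₂ s).toReal)
    (hKs : ∀ᵐ y ∂(lam₂.restrict s), u - K ≤ F y)
    (hint : Integrable (fun y => max (F y) 0 ^ (q - 1)) lam₂)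
    (hval : ∫ y, max (F y) 0 ^ (q - 1) ∂lam₂ ≤ D) :
    u ≤ K + (D / (lam₂ s).toReal) ^ (1 / (q - 1)) := by
  have hq1 : (0:ℝ) < q - 1 := by linarith
  set θ : ℝ := max (u - K) 0 with hθ
  have hθ0 : 0 ≤ θ := le_max_right _ _
  have hstep : θ ^ (q - 1) * (lam₂ s).toReal ≤ D := by
    have h1 : θ ^ (q - 1) * (lam₂ s).toReal = ∫ _ in s, θ ^ (q - 1) ∂lam₂ := by
      rw [setIntegral_const, smul_eq_mul, Measure.real]
      ring
    have h2 : ∫ _ in s, θ ^ (q - 1) ∂lam₂ ≤ ∫ y in s, max (F y) 0 ^ (q - 1) ∂lam₂ := by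
      refine integral_mono_ae (integrable_const _) hint.integrableOn ?_
      filter_upwards [hKs] with y hy
      exact Real.rpow_le_rpow hθ0 (max_le_max hy le_rfl) hq1.le
    have h3 : ∫ y in s, max (F y) 0 ^ (q - 1) ∂lam₂ ≤ ∫ y, max (F y) 0 ^ (q - 1) ∂lam₂ :=
      setIntegral_le_integral hint
        (Eventually.of_forall fun y => Real.rpow_nonneg (le_max_right _ _) _)
    linarith
  have hθle : θ ≤ (D / (lam₂ s).toReal) ^ (1 / (q - 1)) := by
    have h4 : θ ^ (q - 1) ≤ D / (lam₂ s).toReal := (le_div_iff₀ hsp).mpr hstep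
    calc θ = (θ ^ (q - 1)) ^ (1 / (q - 1)) := by
          rw [one_div, Real.rpow_rpow_inv hθ0 hq1.ne']
      _ ≤ (D / (lam₂ s).toReal) ^ (1 / (q - 1)) :=
          Real.rpow_le_rpow (Real.rpow_nonneg hθ0 _) h4 (by positivity)
  have h5 : u - K ≤ θ := le_max_left _ _
  linarith

lemma lower_bound_of_marginal {B : Type*} [MeasurableSpace B]
    {lam₂ : Measure B} [IsFiniteMeasure lam₂]
    {q : ℝ} (hq : 1 < q) {F : B → ℝ} {u M d : ℝ}
    (hd : 0 < d) (hL : 0 < (lam₂ univ).toReal)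
    (hM : ∀ᵐ y ∂lam₂, F y ≤ u + M)
    (hint : Integrable (fun y => max (F y) 0 ^ (q - 1)) lam₂)
    (hval : d ≤ ∫ y, max (F y) 0 ^ (q - 1) ∂lam₂) :
    -M + (d / (lam₂ univ).toReal) ^ (1 / (q - 1)) ≤ u := by
  have hq1 : (0:ℝ) < q - 1 := by linarith
  set θ : ℝ := max (u + M) 0 with hθ
  have hθ0 : 0 ≤ θ := le_max_right _ _
  have hstep : d ≤ θ ^ (q - 1) * (lam₂ univ).toReal := by
    have h2 : ∫ y, max (F y) 0 ^ (q - 1) ∂lam₂ ≤ ∫ _, θ ^ (q - 1) ∂lam₂ := by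
      refine integral_mono_ae hint (integrable_const _) ?_
      filter_upwards [hM] with y hy
      exact Real.rpow_le_rpow (le_max_right _ _) (max_le_max hy le_rfl) hq1.le
    have h3 : ∫ _, θ ^ (q - 1) ∂lam₂ = θ ^ (q - 1) * (lam₂ univ).toReal := by
      rw [integral_const, smul_eq_mul, Measure.real]
      ring
    linarith
  set m : ℝ := (d / (lam₂ univ).toReal) ^ (1 / (q - 1)) with hm
  have hmpos : 0 < m := Real.rpow_pos_of_pos (div_pos hd hL) _
  have hmle : m ≤ θ := by
    have h4 : d / (lam₂ univ).toReal ≤ θ ^ (q - 1) := (div_le_iff₀ hL).mpr hstep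
    calc m ≤ (θ ^ (q - 1)) ^ (1 / (q - 1)) :=
          Real.rpow_le_rpow (by positivity) h4 (by positivity)
      _ = θ := by rw [one_div, Real.rpow_rpow_inv hθ0 hq1.ne']
  have hθeq : m ≤ u + M := by
    rcases le_or_gt (u + M) 0 with h | h
    · rw [hθ, max_eq_right h] at hmle
      linarith
    · rw [hθ, max_eq_left h.le] at hmle
      exact hmle
  linarith


end Helpers

/-- Theorem: regularity of solutions of (P†) for `p ≥ 2`.
In the `L^p` setting with `p ≥ 2`, every optimal solution `(ᾱ₁, ᾱ₂)` of (P†) satisfies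
`ᾱ_i ∈ L^q(Ω_i,dλ_i)`, the negative parts are essentially bounded, and
`γ^{1−q}((ᾱ₁ ⊕ ᾱ₂ − c)₊)^{q−1}` has the marginal densities `dμ_i/dλ_i`. -/
theorem Pdagger_solution_regularity
    (n : ℕ) (Ω₁ Ω₂ : Set (Fin n → ℝ)) (hΩ₁ : IsCompact Ω₁) (hΩ₂ : IsCompact Ω₂)
    (lam₁ : Measure ↥Ω₁) (lam₂ : Measure ↥Ω₂)
    [IsFiniteMeasure lam₁] [IsFiniteMeasure lam₂]
    [lam₁.IsOpenPosMeasure] [lam₂.IsOpenPosMeasure]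
    (p q : ℝ) (hp : 2 ≤ p) (hpq : 1 / p + 1 / q = 1)
    (c : ↥Ω₁ × ↥Ω₂ → ℝ) (hc : Continuous c)
    (cdag : ℝ) (hcdag : ∀ z, cdag ≤ c z)
    (μ₁ : Measure ↥Ω₁) (μ₂ : Measure ↥Ω₂)
    [IsProbabilityMeasure μ₁] [IsProbabilityMeasure μ₂]
    (hμ₁ : μ₁ ≪ lam₁) (hμ₂ : μ₂ ≪ lam₂)
    (hd₁ : MemLp (fun x => (μ₁.rnDeriv lam₁ x).toReal) (ENNReal.ofReal p) lam₁)
    (hd₂ : MemLp (fun y => (μ₂.rnDeriv lam₂ y).toReal) (ENNReal.ofReal p) lam₂)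
    (δ : ℝ) (hδ : 0 < δ)
    (hδ₁ : ∀ᵐ x ∂lam₁, δ ≤ (μ₁.rnDeriv lam₁ x).toReal)
    (hδ₂ : ∀ᵐ y ∂lam₂, δ ≤ (μ₂.rnDeriv lam₂ y).toReal)
    (γ : ℝ) (hγ : 0 < γ)
    (a₁ : ↥Ω₁ → ℝ) (a₂ : ↥Ω₂ → ℝ)
    (hfeas : PdaggerFeasible q c lam₁ lam₂ a₁ a₂)
    (hopt : ∀ (α₁ : ↥Ω₁ → ℝ) (α₂ : ↥Ω₂ → ℝ), PdaggerFeasible q c lam₁ lam₂ α₁ α₂ →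
      LambdaValue q γ c (lam₁.prod lam₂) μ₁ μ₂ a₁ a₂ ≤
        LambdaValue q γ c (lam₁.prod lam₂) μ₁ μ₂ α₁ α₂) :
    MemLp a₁ (ENNReal.ofReal q) lam₁ ∧
    MemLp a₂ (ENNReal.ofReal q) lam₂ ∧
    MemLp (fun x => max (-(a₁ x)) 0) ∞ lam₁ ∧
    MemLp (fun y => max (-(a₂ y)) 0) ∞ lam₂ ∧
    (∀ᵐ x₁ ∂lam₁,
      ∫ x₂, (max (a₁ x₁ + a₂ x₂ - c (x₁, x₂)) 0) ^ (q - 1) ∂lam₂ =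
        γ ^ (q - 1) * (μ₁.rnDeriv lam₁ x₁).toReal) ∧
    (∀ᵐ x₂ ∂lam₂,
      ∫ x₁, (max (a₁ x₁ + a₂ x₂ - c (x₁, x₂)) 0) ^ (q - 1) ∂lam₁ =
        γ ^ (q - 1) * (μ₂.rnDeriv lam₂ x₂).toReal) := by
  
  rcases isEmpty_or_nonempty ↥Ω₁ with hE | hNE₁
  · refine absurd (measure_univ (μ := μ₁)) ?_
    rw [Set.univ_eq_empty_iff.mpr hE, measure_empty]
    exact zero_ne_one
  rcases isEmpty_or_nonempty ↥Ω₂ with hE | hNE₂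
  · refine absurd (measure_univ (μ := μ₂)) ?_
    rw [Set.univ_eq_empty_iff.mpr hE, measure_empty]
    exact zero_ne_one
  haveI := hNE₁
  haveI := hNE₂
  have hp0 : (0:ℝ) < p := by linarith
  have hip : (0:ℝ) < 1 / p := by positivity
  have hip2 : 1 / p ≤ 1 / 2 := by
    rw [div_le_div_iff₀ hp0 (by norm_num : (0:ℝ) < 2)]
    linarith
  have hiqpos : 0 < 1 / q := by linarith
  have hq0 : (0:ℝ) < q := one_div_pos.mp hiqpos
  have hq : 1 < q := by
    have h1 : 1 / q < 1 := by linarith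
    exact (div_lt_one hq0).mp h1
  have hγq : (0:ℝ) < γ ^ (q - 1) := Real.rpow_pos_of_pos hγ _
  by_cases hB₁ : ∃ R : ℝ, ∀ᵐ x ∂lam₁, (μ₁.rnDeriv lam₁ x).toReal ≤ R
  swap
  · rw [not_exists] at hB₁
    obtain ⟨h, -, h0, hint, hnint⟩ := exists_bad_h lam₁ μ₁ hμ₁ hB₁
    exact (caseA_side1 hq0 hγq hcdag h0 hint hnint hopt).elim
  by_cases hB₂ : ∃ R : ℝ, ∀ᵐ y ∂lam₂, (μ₂.rnDeriv lam₂ y).toReal ≤ R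
  swap
  · rw [not_exists] at hB₂
    obtain ⟨h, -, h0, hint, hnint⟩ := exists_bad_h lam₂ μ₂ hμ₂ hB₂
    exact (caseA_side2 hq0 hγq hcdag h0 hint hnint hopt).elim
  obtain ⟨R₁, hR₁⟩ := hB₁
  obtain ⟨R₂, hR₂⟩ := hB₂
  haveI : CompactSpace ↥Ω₁ := isCompact_iff_compactSpace.mp hΩ₁
  haveI : CompactSpace ↥Ω₂ := isCompact_iff_compactSpace.mp hΩ₂
  obtain ⟨zm, -, hzm⟩ := isCompact_univ.exists_isMaxOn univ_nonempty hc.continuousOn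
  have hcmax : ∀ z, c z ≤ c zm := fun z => hzm (mem_univ z)
  have hcm : AEStronglyMeasurable c (lam₁.prod lam₂) := hc.aestronglyMeasurable
  have hm1 := EL_side1 hμ₁ hq hγ hcm hR₁ hfeas hopt
  have hm2 := EL_side2 (μ₁ := μ₁) hμ₂ hq hcm hR₂ hfeas hopt
  have hS : AEStronglyMeasurable (fun z : ↥Ω₁ × ↥Ω₂ => a₁ z.1 + a₂ z.2 - c z)
      (lam₁.prod lam₂) := by
    refine AEStronglyMeasurable.sub (AEStronglyMeasurable.add ?_ ?_) hcm
    · exact hfeas.1.aestronglyMeasurable.comp_quasiMeasurePreserving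
        Measure.quasiMeasurePreserving_fst
    · exact hfeas.2.1.aestronglyMeasurable.comp_quasiMeasurePreserving
        Measure.quasiMeasurePreserving_snd
  have hTint : Integrable (fun z : ↥Ω₁ × ↥Ω₂ => max (a₁ z.1 + a₂ z.2 - c z) 0 ^ (q - 1))
      (lam₁.prod lam₂) := integrable_maxRpow_qsub1 hq hS hfeas.2.2
  obtain ⟨b₁, hb₁sm, hab₁⟩ := hfeas.1.aestronglyMeasurable
  obtain ⟨b₂, hb₂sm, hab₂⟩ := hfeas.2.1.aestronglyMeasurable
  -- a positive measure set on which `a₂` is bounded below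
  have hexK₂ : ∃ K : ℕ, lam₂ {y | -(K:ℝ) ≤ b₂ y} ≠ 0 := by
    by_contra hcon
    push_neg at hcon
    have hcover : (⋃ K : ℕ, {y | -(K:ℝ) ≤ b₂ y}) = univ := by
      ext y
      simp only [mem_iUnion, mem_setOf_eq, mem_univ, iff_true]
      obtain ⟨K, hK⟩ := exists_nat_ge (-(b₂ y))
      exact ⟨K, by linarith⟩
    have h0 : lam₂ (univ : Set ↥Ω₂) = 0 := by
      rw [← hcover]
      exact measure_iUnion_null fun K => hcon K
    exact absurd h0 (isOpen_univ.measure_pos lam₂ univ_nonempty).ne'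
  obtain ⟨K₂, hK₂⟩ := hexK₂
  have hs₂m : MeasurableSet {y | -(K₂:ℝ) ≤ b₂ y} :=
    measurableSet_le measurable_const hb₂sm.measurable
  have hs₂pos : 0 < (lam₂ {y | -(K₂:ℝ) ≤ b₂ y}).toReal :=
    ENNReal.toReal_pos hK₂ (measure_ne_top _ _)
  have hs₂ae : ∀ᵐ y ∂(lam₂.restrict {y | -(K₂:ℝ) ≤ b₂ y}), -(K₂:ℝ) ≤ a₂ y := by
    filter_upwards [ae_restrict_of_ae hab₂, ae_restrict_mem hs₂m] with y h1 h2
    rw [h1]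
    exact h2
  -- a positive measure set on which `a₁` is bounded below
  have hexK₁ : ∃ K : ℕ, lam₁ {x | -(K:ℝ) ≤ b₁ x} ≠ 0 := by
    by_contra hcon
    push_neg at hcon
    have hcover : (⋃ K : ℕ, {x | -(K:ℝ) ≤ b₁ x}) = univ := by
      ext x
      simp only [mem_iUnion, mem_setOf_eq, mem_univ, iff_true]
      obtain ⟨K, hK⟩ := exists_nat_ge (-(b₁ x))
      exact ⟨K, by linarith⟩
    have h0 : lam₁ (univ : Set ↥Ω₁) = 0 := by
      rw [← hcover]
      exact measure_iUnion_null fun K => hcon K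
    exact absurd h0 (isOpen_univ.measure_pos lam₁ univ_nonempty).ne'
  obtain ⟨K₁, hK₁⟩ := hexK₁
  have hs₁m : MeasurableSet {x | -(K₁:ℝ) ≤ b₁ x} :=
    measurableSet_le measurable_const hb₁sm.measurable
  have hs₁pos : 0 < (lam₁ {x | -(K₁:ℝ) ≤ b₁ x}).toReal :=
    ENNReal.toReal_pos hK₁ (measure_ne_top _ _)
  have hs₁ae : ∀ᵐ x ∂(lam₁.restrict {x | -(K₁:ℝ) ≤ b₁ x}), -(K₁:ℝ) ≤ a₁ x := by
    filter_upwards [ae_restrict_of_ae hab₁, ae_restrict_mem hs₁m] with x h1 h2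
    rw [h1]
    exact h2
  -- upper bounds
  have hup₁ : ∀ᵐ x ∂lam₁, a₁ x ≤ ((K₂:ℝ) + c zm) +
      (γ ^ (q - 1) * R₁ / (lam₂ {y | -(K₂:ℝ) ≤ b₂ y}).toReal) ^ (1 / (q - 1)) := by
    filter_upwards [hm1, hR₁, hTint.prod_right_ae] with x h1 h2 h3
    have hval : ∫ y, max (a₁ x + a₂ y - c (x, y)) 0 ^ (q - 1) ∂lam₂ ≤ γ ^ (q - 1) * R₁ :=
      le_trans (le_of_eq h1) (mul_le_mul_of_nonneg_left h2 hγq.le)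
    have hKs : ∀ᵐ y ∂(lam₂.restrict {y | -(K₂:ℝ) ≤ b₂ y}),
        a₁ x - ((K₂:ℝ) + c zm) ≤ a₁ x + a₂ y - c (x, y) := by
      filter_upwards [hs₂ae] with y hy
      have := hcmax (x, y)
      linarith
    exact upper_bound_of_marginal hq hs₂pos hKs h3 hval
  have hup₂ : ∀ᵐ y ∂lam₂, a₂ y ≤ ((K₁:ℝ) + c zm) +
      (γ ^ (q - 1) * R₂ / (lam₁ {x | -(K₁:ℝ) ≤ b₁ x}).toReal) ^ (1 / (q - 1)) := by
    filter_upwards [hm2, hR₂, hTint.prod_left_ae] with y h1 h2 h3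
    have hval : ∫ x, max (a₁ x + a₂ y - c (x, y)) 0 ^ (q - 1) ∂lam₁ ≤ γ ^ (q - 1) * R₂ :=
      le_trans (le_of_eq h1) (mul_le_mul_of_nonneg_left h2 hγq.le)
    have hKs : ∀ᵐ x ∂(lam₁.restrict {x | -(K₁:ℝ) ≤ b₁ x}),
        a₂ y - ((K₁:ℝ) + c zm) ≤ a₁ x + a₂ y - c (x, y) := by
      filter_upwards [hs₁ae] with x hx
      have := hcmax (x, y)
      linarith
    exact upper_bound_of_marginal hq hs₁pos hKs h3 hval
  -- lower bounds
  have hL₂ : 0 < (lam₂ (univ : Set ↥Ω₂)).toReal :=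
    ENNReal.toReal_pos (isOpen_univ.measure_pos lam₂ univ_nonempty).ne' (measure_ne_top _ _)
  have hL₁ : 0 < (lam₁ (univ : Set ↥Ω₁)).toReal :=
    ENNReal.toReal_pos (isOpen_univ.measure_pos lam₁ univ_nonempty).ne' (measure_ne_top _ _)
  have hdpos : 0 < γ ^ (q - 1) * δ := by positivity
  set M₁ : ℝ := ((K₂:ℝ) + c zm) +
      (γ ^ (q - 1) * R₁ / (lam₂ {y | -(K₂:ℝ) ≤ b₂ y}).toReal) ^ (1 / (q - 1)) with hM₁def
  set M₂ : ℝ := ((K₁:ℝ) + c zm) +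
      (γ ^ (q - 1) * R₂ / (lam₁ {x | -(K₁:ℝ) ≤ b₁ x}).toReal) ^ (1 / (q - 1)) with hM₂def
  have hlo₁ : ∀ᵐ x ∂lam₁, -(M₂ - cdag) +
      (γ ^ (q - 1) * δ / (lam₂ (univ : Set ↥Ω₂)).toReal) ^ (1 / (q - 1)) ≤ a₁ x := by
    filter_upwards [hm1, hδ₁, hTint.prod_right_ae] with x h1 h2 h3
    have hval : γ ^ (q - 1) * δ ≤ ∫ y, max (a₁ x + a₂ y - c (x, y)) 0 ^ (q - 1) ∂lam₂ :=
      le_trans (mul_le_mul_of_nonneg_left h2 hγq.le) (le_of_eq h1.symm)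
    have hM : ∀ᵐ y ∂lam₂, a₁ x + a₂ y - c (x, y) ≤ a₁ x + (M₂ - cdag) := by
      filter_upwards [hup₂] with y hy
      have := hcdag (x, y)
      linarith
    exact lower_bound_of_marginal hq hdpos hL₂ hM h3 hval
  have hlo₂ : ∀ᵐ y ∂lam₂, -(M₁ - cdag) +
      (γ ^ (q - 1) * δ / (lam₁ (univ : Set ↥Ω₁)).toReal) ^ (1 / (q - 1)) ≤ a₂ y := by
    filter_upwards [hm2, hδ₂, hTint.prod_left_ae] with y h1 h2 h3
    have hval : γ ^ (q - 1) * δ ≤ ∫ x, max (a₁ x + a₂ y - c (x, y)) 0 ^ (q - 1) ∂lam₁ :=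
      le_trans (mul_le_mul_of_nonneg_left h2 hγq.le) (le_of_eq h1.symm)
    have hM : ∀ᵐ x ∂lam₁, a₁ x + a₂ y - c (x, y) ≤ a₂ y + (M₁ - cdag) := by
      filter_upwards [hup₁] with x hx
      have := hcdag (x, y)
      linarith
    exact lower_bound_of_marginal hq hdpos hL₁ hM h3 hval
  -- absolute bounds
  set L₁ : ℝ := -(M₂ - cdag) +
      (γ ^ (q - 1) * δ / (lam₂ (univ : Set ↥Ω₂)).toReal) ^ (1 / (q - 1)) with hL₁def
  set L₂ : ℝ := -(M₁ - cdag) +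
      (γ ^ (q - 1) * δ / (lam₁ (univ : Set ↥Ω₁)).toReal) ^ (1 / (q - 1)) with hL₂def
  have habs₁ : ∀ᵐ x ∂lam₁, |a₁ x| ≤ max |M₁| |L₁| := by
    filter_upwards [hup₁, hlo₁] with x h1 h2
    rw [abs_le]
    constructor
    · have := neg_abs_le L₁
      have := le_max_right |M₁| |L₁|
      linarith
    · have := le_abs_self M₁
      have := le_max_left |M₁| |L₁|
      linarith
  have habs₂ : ∀ᵐ y ∂lam₂, |a₂ y| ≤ max |M₂| |L₂| := by
    filter_upwards [hup₂, hlo₂] with y h1 h2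
    rw [abs_le]
    constructor
    · have := neg_abs_le L₂
      have := le_max_right |M₂| |L₂|
      linarith
    · have := le_abs_self M₂
      have := le_max_left |M₂| |L₂|
      linarith
  have hmem₁top : MemLp a₁ ∞ lam₁ := by
    refine memLp_top_of_bound hfeas.1.aestronglyMeasurable (max |M₁| |L₁|) ?_
    filter_upwards [habs₁] with x hx
    rwa [Real.norm_eq_abs]
  have hmem₂top : MemLp a₂ ∞ lam₂ := by
    refine memLp_top_of_bound hfeas.2.1.aestronglyMeasurable (max |M₂| |L₂|) ?_
    filter_upwards [habs₂] with y hy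
    rwa [Real.norm_eq_abs]
  have hneg₁ : MemLp (fun x => max (-(a₁ x)) 0) ∞ lam₁ := by
    refine memLp_top_of_bound ((continuous_neg.max continuous_const).comp_aestronglyMeasurable
      hfeas.1.aestronglyMeasurable) (max |M₁| |L₁|) ?_
    filter_upwards [habs₁] with x hx
    rw [Real.norm_eq_abs, abs_of_nonneg (le_max_right _ _)]
    refine max_le ?_ ?_
    · have := neg_le_abs (a₁ x)
      linarith
    · have := abs_nonneg M₁
      have := le_max_left |M₁| |L₁|
      linarith
  have hneg₂ : MemLp (fun y => max (-(a₂ y)) 0) ∞ lam₂ := by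
    refine memLp_top_of_bound ((continuous_neg.max continuous_const).comp_aestronglyMeasurable
      hfeas.2.1.aestronglyMeasurable) (max |M₂| |L₂|) ?_
    filter_upwards [habs₂] with y hy
    rw [Real.norm_eq_abs, abs_of_nonneg (le_max_right _ _)]
    refine max_le ?_ ?_
    · have := neg_le_abs (a₂ y)
      linarith
    · have := abs_nonneg M₂
      have := le_max_left |M₂| |L₂|
      linarith
  exact ⟨hmem₁top.mono_exponent le_top, hmem₂top.mono_exponent le_top,
    hneg₁, hneg₂, hm1, hm2⟩
end
end
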